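/- arXiv:1810.08868 — 5 statements merged into one kernel-verified Lean document; each statement's English description precedes it below -/
import Mathlib

section
/- Let g_N be a taming function with ν = 1. There exists a constant C_N ≥ 0, depending only on g_N, such that for every smooth ℤ³-periodic divergence-free vector field u : ℝ³ → ℝ³, ∫_{[0,1]³} ⟨Δu(x) − ((u·∇)u)(x) − g_N(|u(x)|²)u(x), u(x)⟩ dx ≤ C_N ‖u‖_{L²}². (This is the L²-energy estimate ⟨F(u), u⟩_{H⁰} ≤ C_N‖u‖²_{H⁰} for the tamed Navier–Stokes drift F(u) = Δu − (u·∇)u − g_N(|u|²)u, tested against divergence-free fields so that the Leray projection drops out.) -/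
open MeasureTheory

noncomputable section

/-- Vector fields on `ℝ³` with values in `ℝ³`. -/
abbrev V3 := Fin 3 → ℝ

/-- `ℤ³`-periodicity: `u (x + k) = u x` for every integer vector `k`. -/
def IsPeriodic (u : V3 → V3) : Prop :=
  ∀ (x : V3) (k : Fin 3 → ℤ), u (x + fun i => (k i : ℝ)) = u x

/-- The `i`-th partial derivative `∂ᵢ u` at `x`. -/
def pd (u : V3 → V3) (i : Fin 3) (x : V3) : V3 :=
  fderiv ℝ u x (Pi.single i 1)

/-- Divergence-free condition `∑ᵢ ∂ᵢ uⁱ = 0`. -/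
def IsDivFree (u : V3 → V3) : Prop :=
  ∀ x : V3, ∑ i : Fin 3, pd u i x i = 0

/-- The Laplacian `Δu = ∑ᵢ ∂ᵢ∂ᵢ u`. -/
def lap (u : V3 → V3) (x : V3) : V3 :=
  ∑ i : Fin 3, fderiv ℝ (pd u i) x (Pi.single i 1)

/-- The convection term `(u·∇)v = ∑ᵢ uⁱ ∂ᵢ v`. -/
def conv (u v : V3 → V3) (x : V3) : V3 :=
  ∑ i : Fin 3, u x i • pd v i x

/-- Euclidean inner product on `ℝ³`. -/
def dot (a b : V3) : ℝ := ∑ j : Fin 3, a j * b j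

/-- Squared Euclidean norm on `ℝ³`. -/
def normSq (a : V3) : ℝ := ∑ j : Fin 3, (a j) ^ 2

/-- The periodicity cell `[0,1]³`. -/
def cube : Set V3 := Set.Icc 0 1

/-- `‖u‖²_{L²} = ∫_{[0,1]³} |u|² dx`. -/
def l2sq (u : V3 → V3) : ℝ := ∫ x in cube, normSq (u x)

/-- `|∇u(x)|² = ∑_{i,j} |∂ᵢ uʲ(x)|²`. -/
def gradSq (u : V3 → V3) (x : V3) : ℝ := ∑ i : Fin 3, normSq (pd u i x)

/-- `‖u‖²_{H¹} = ∫_{[0,1]³} (|u|² + |∇u|²) dx`. -/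
def h1sq (u : V3 → V3) : ℝ := ∫ x in cube, (normSq (u x) + gradSq u x)

/-- `‖u‖²_{H²} = ∫_{[0,1]³} |u - Δu|² dx`. -/
def h2sq (u : V3 → V3) : ℝ := ∫ x in cube, normSq (u x - lap u x)

/-- A taming function with `ν = 1`: a smooth `g : ℝ → ℝ` vanishing on `(-∞, N]`,
equal to `r - N` on `[N+1, ∞)`, with derivative between `0` and some `C₀ > 0`. -/
def IsTaming (N : ℝ) (g : ℝ → ℝ) : Prop :=
  ContDiff ℝ (⊤ : ℕ∞) g ∧ (∀ r ≤ N, g r = 0) ∧ (∀ r, N + 1 ≤ r → g r = r - N) ∧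
    ∃ C₀ > 0, ∀ r, 0 ≤ deriv g r ∧ deriv g r ≤ C₀

end

section Aux

open Finset MeasureTheory

lemma contDiff_fderiv_apply {f : V3 → V3} (hf : ContDiff ℝ (⊤ : ℕ∞) f) (v : V3) :
    ContDiff ℝ (⊤ : ℕ∞) (fun x => fderiv ℝ f x v) :=
  (hf.fderiv_right (m := (⊤ : ℕ∞)) (by exact_mod_cast le_top)).clm_apply contDiff_const

lemma normSq_nonneg'' (a : V3) : 0 ≤ normSq a :=
  Finset.sum_nonneg fun _ _ => sq_nonneg _

/-- Periodic differentiable functions have periodic derivative. -/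
lemma fderiv_periodic' {E : Type*} [NormedAddCommGroup E] [NormedSpace ℝ E]
    (f : V3 → E) (hf : Differentiable ℝ f)
    (hp : ∀ (x : V3) (k : Fin 3 → ℤ), f (x + fun m => (k m : ℝ)) = f x)
    (x : V3) (k : Fin 3 → ℤ) :
    fderiv ℝ f (x + fun m => (k m : ℝ)) = fderiv ℝ f x := by
  set c : V3 := fun m => (k m : ℝ) with hc
  have h1 : HasFDerivAt (f ∘ fun y => y + c)
      ((fderiv ℝ f (x + c)).comp (ContinuousLinearMap.id ℝ V3)) x :=
    (hf (x + c)).hasFDerivAt.comp x ((hasFDerivAt_id x).add_const c)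
  have h2 : (f ∘ fun y => y + c) = f := funext fun y => hp y k
  rw [h2, ContinuousLinearMap.comp_id] at h1
  exact h1.fderiv.symm

lemma insertNth_one_eq (i : Fin 3) (x : Fin 2 → ℝ) :
    i.insertNth (1:ℝ) x = i.insertNth (0:ℝ) x
      + fun m => (((Pi.single i 1 : Fin 3 → ℤ) m : ℤ) : ℝ) := by
  funext m
  refine Fin.succAboveCases i ?_ ?_ m
  · simp
  · intro j
    simp [Pi.single_eq_of_ne (Fin.succAbove_ne i j)]

/-- The key integration-by-parts identity on the torus. -/
lemma integral_key (u : V3 → V3) (hu : ContDiff ℝ (⊤ : ℕ∞) u) (hp : IsPeriodic u)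
    (hdf : IsDivFree u) :
    (∫ x in cube, (dot (lap u x) (u x) + gradSq u x - dot (conv u u x) (u x))) = 0 := by
  classical
  have hud : Differentiable ℝ u := hu.differentiable (by simp)
  have hpdc : ∀ i : Fin 3, ContDiff ℝ (⊤ : ℕ∞) (pd u i) := fun i =>
    contDiff_fderiv_apply hu _
  have hpdd : ∀ i : Fin 3, Differentiable ℝ (pd u i) := fun i => (hpdc i).differentiable (by simp)
  have cu : Continuous u := hu.continuous
  have cpd : ∀ i : Fin 3, Continuous (pd u i) := fun i => (hpdc i).continuous
  have cB : ∀ i : Fin 3, Continuous (fun x => fderiv ℝ (pd u i) x (Pi.single i 1)) := fun i =>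
    (contDiff_fderiv_apply (hpdc i) _).continuous
  set φ : Fin 3 → V3 → ℝ := fun i x =>
      (∑ j : Fin 3, pd u i x j * u x j) - u x i * ((1:ℝ)/2 * ∑ j : Fin 3, u x j * u x j) with hφ
  have hD : ∀ (i : Fin 3) (x : V3), ∃ D : V3 →L[ℝ] ℝ, HasFDerivAt (φ i) D x ∧
      D (Pi.single i 1) = (∑ j : Fin 3, pd u i x j * pd u i x j)
        + (∑ j : Fin 3, u x j * fderiv ℝ (pd u i) x (Pi.single i 1) j)
        - (pd u i x i * ((1:ℝ)/2 * ∑ j : Fin 3, u x j * u x j)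
           + u x i * (∑ j : Fin 3, u x j * pd u i x j)) := by
    intro i x
    have hu_j : ∀ j : Fin 3, HasFDerivAt (fun y => u y j)
        ((ContinuousLinearMap.proj j : V3 →L[ℝ] ℝ).comp (fderiv ℝ u x)) x := fun j =>
      (ContinuousLinearMap.proj j :
        V3 →L[ℝ] ℝ).hasFDerivAt.comp x (hud x).hasFDerivAt
    have hpd_j : ∀ j : Fin 3, HasFDerivAt (fun y => pd u i y j)
        ((ContinuousLinearMap.proj j : V3 →L[ℝ] ℝ).comp (fderiv ℝ (pd u i) x)) x := fun j =>
      (ContinuousLinearMap.proj j :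
        V3 →L[ℝ] ℝ).hasFDerivAt.comp x (hpdd i x).hasFDerivAt
    refine ⟨_, (HasFDerivAt.fun_sum fun j _ => (hpd_j j).fun_mul (hu_j j)).fun_sub
        ((hu_j i).fun_mul ((HasFDerivAt.fun_sum fun j _ => (hu_j j).fun_mul (hu_j j)).const_mul ((1:ℝ)/2))), ?_⟩
    have e1 : (fderiv ℝ u x) (Pi.single i 1) = pd u i x := rfl
    simp only [ContinuousLinearMap.sub_apply, ContinuousLinearMap.sum_apply,
      ContinuousLinearMap.add_apply, ContinuousLinearMap.smul_apply,
      ContinuousLinearMap.coe_comp', Function.comp_apply, ContinuousLinearMap.proj_apply,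
      ContinuousLinearMap.coe_smul', Pi.smul_apply, smul_eq_mul, e1,
      ContinuousLinearMap.smul_apply]
    have e2 : ∑ j : Fin 3, (u x j * pd u i x j + u x j * pd u i x j)
        = 2 * ∑ j : Fin 3, u x j * pd u i x j := by
      rw [Finset.mul_sum]; exact Finset.sum_congr rfl fun j _ => by ring
    rw [e2, Finset.sum_add_distrib]
    ring
  choose D hDd hDval using hD
  have hdiv : ∀ x : V3, (∑ i : Fin 3, D i x (Pi.single i 1)) =
      dot (lap u x) (u x) + gradSq u x - dot (conv u u x) (u x) := by
    intro x
    simp only [hDval, dot, gradSq, normSq, lap, conv, Finset.sum_apply, Pi.smul_apply,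
      smul_eq_mul]
    rw [Finset.sum_sub_distrib, Finset.sum_add_distrib, Finset.sum_add_distrib]
    have eC : ∑ i : Fin 3, pd u i x i * ((1:ℝ)/2 * ∑ j : Fin 3, u x j * u x j) = 0 := by
      rw [← Finset.sum_mul, hdf x, zero_mul]
    rw [eC]
    have e3 : ∑ i : Fin 3, ∑ j : Fin 3, pd u i x j * pd u i x j
        = ∑ i : Fin 3, ∑ j : Fin 3, pd u i x j ^ 2 := by
      refine Finset.sum_congr rfl fun i _ => Finset.sum_congr rfl fun j _ => (sq _).symm
    have e4 : ∑ i : Fin 3, ∑ j : Fin 3, u x j * fderiv ℝ (pd u i) x (Pi.single i 1) j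
        = ∑ j : Fin 3, (∑ i : Fin 3, fderiv ℝ (pd u i) x (Pi.single i 1) j) * u x j := by
      rw [Finset.sum_comm]
      refine Finset.sum_congr rfl fun j _ => ?_
      rw [Finset.sum_mul]
      exact Finset.sum_congr rfl fun i _ => by ring
    have e5 : ∑ i : Fin 3, u x i * ∑ j : Fin 3, u x j * pd u i x j
        = ∑ j : Fin 3, (∑ i : Fin 3, u x i * pd u i x j) * u x j := by
      simp_rw [Finset.mul_sum]
      rw [Finset.sum_comm]
      refine Finset.sum_congr rfl fun j _ => ?_
      rw [Finset.sum_mul]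
      exact Finset.sum_congr rfl fun i _ => by ring
    rw [e3, e4, e5]
    ring
  have hmeas : MeasurableSet cube := measurableSet_Icc
  have hcont : Continuous fun x =>
      dot (lap u x) (u x) + gradSq u x - dot (conv u u x) (u x) := by
    have capp : ∀ {f : V3 → V3}, Continuous f → ∀ j : Fin 3, Continuous fun x => f x j :=
      fun hf j => (continuous_apply j).comp hf
    have clap : ∀ j : Fin 3, Continuous fun x => lap u x j := by
      intro j
      simp only [lap, Finset.sum_apply]
      exact continuous_finset_sum _ fun i _ => (capp (cB i) j)
    have cconv : ∀ j : Fin 3, Continuous fun x => conv u u x j := by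
      intro j
      simp only [conv, Finset.sum_apply, Pi.smul_apply, smul_eq_mul]
      exact continuous_finset_sum _ fun i _ => (capp cu i).mul (capp (cpd i) j)
    refine Continuous.sub (Continuous.add ?_ ?_) ?_
    · exact continuous_finset_sum _ fun j _ => (clap j).mul (capp cu j)
    · exact continuous_finset_sum _ fun i _ =>
        continuous_finset_sum _ fun j _ => (capp (cpd i) j).pow 2
    · exact continuous_finset_sum _ fun j _ => (cconv j).mul (capp cu j)
  have hInt : IntegrableOn (fun x => ∑ i : Fin 3, D i x (Pi.single i 1))
      (Set.Icc (0 : V3) 1) := by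
    rw [show (fun x => ∑ i : Fin 3, D i x (Pi.single i 1)) = fun x =>
        dot (lap u x) (u x) + gradSq u x - dot (conv u u x) (u x) from funext hdiv]
    exact hcont.continuousOn.integrableOn_compact isCompact_Icc
  have hφc : ∀ i : Fin 3, ContinuousOn (φ i) (Set.Icc (0 : V3) 1) := by
    intro i
    refine Continuous.continuousOn ?_
    refine Continuous.sub (continuous_finset_sum _ fun j _ =>
      (((continuous_apply j).comp (cpd i))).mul ((continuous_apply j).comp cu)) ?_
    exact (((continuous_apply i).comp cu)).mul
      (continuous_const.mul (continuous_finset_sum _ fun j _ =>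
        ((continuous_apply j).comp cu).mul ((continuous_apply j).comp cu)))
  have hφp : ∀ (i : Fin 3) (y : V3) (k : Fin 3 → ℤ),
      φ i (y + fun m => (k m : ℝ)) = φ i y := by
    intro i y k
    have h1 : u (y + fun m => (k m : ℝ)) = u y := hp y k
    have h2 : pd u i (y + fun m => (k m : ℝ)) = pd u i y := by
      unfold pd; rw [fderiv_periodic' u hud hp]
    simp only [hφ, h1, h2]
  have hb : (0 : V3) ≤ 1 := fun i => by norm_num
  have hdt := integral_divergence_of_hasFDerivAt_off_countable'
    (0 : V3) (1 : V3) hb φ (fun i x => D i x) ∅ Set.countable_empty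
    hφc (fun x _ i => hDd i x) hInt
  have hbd : ∑ i : Fin 3,
      ((∫ x in Set.Icc ((0:V3) ∘ i.succAbove) ((1:V3) ∘ i.succAbove),
        φ i (i.insertNth ((1:V3) i) x)) -
       ∫ x in Set.Icc ((0:V3) ∘ i.succAbove) ((1:V3) ∘ i.succAbove),
        φ i (i.insertNth ((0:V3) i) x)) = 0 := by
    refine Finset.sum_eq_zero fun i _ => sub_eq_zero.2 ?_
    refine integral_congr_ae (Filter.Eventually.of_forall fun x => ?_)
    have : φ i (i.insertNth ((1:V3) i) x) = φ i (i.insertNth ((0:V3) i) x) := by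
      rw [Pi.one_apply, Pi.zero_apply, insertNth_one_eq i x]
      exact hφp i _ (Pi.single i 1)
    exact this
  rw [hbd] at hdt
  have : (∫ x in Set.Icc (0:V3) 1, ∑ i : Fin 3, D i x (Pi.single i 1)) =
      ∫ x in cube, (dot (lap u x) (u x) + gradSq u x - dot (conv u u x) (u x)) := by
    rw [show cube = Set.Icc (0:V3) 1 from rfl]
    exact integral_congr_ae (Filter.Eventually.of_forall fun x => hdiv x)
  rw [this] at hdt
  exact hdt

end Aux

/-- `L²`-energy estimate for the tamed Navier–Stokes drift `F(u) = Δu - (u·∇)u - g_N(|u|²)u`: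
there is a constant `C_N ≥ 0`, depending only on `g_N`, with
`∫_{[0,1]³} ⟨F(u), u⟩ dx ≤ C_N ‖u‖²_{L²}` for all smooth periodic divergence-free `u`. -/
theorem tamed_drift_L2_energy_estimate (N : ℝ) (gN : ℝ → ℝ) (hg : IsTaming N gN) :
    ∃ C_N : ℝ, 0 ≤ C_N ∧ ∀ u : V3 → V3, ContDiff ℝ (⊤ : ℕ∞) u → IsPeriodic u → IsDivFree u →
      (∫ x in cube, dot (lap u x - conv u u x - gN (normSq (u x)) • u x) (u x)) ≤
        C_N * l2sq u := by
  classical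
  refine ⟨0, le_rfl, fun u hu hp hdf => ?_⟩
  have hud : Differentiable ℝ u := hu.differentiable (by simp)
  have hpdc : ∀ i : Fin 3, ContDiff ℝ (⊤ : ℕ∞) (pd u i) := fun i =>
    contDiff_fderiv_apply hu _
  have cu : Continuous u := hu.continuous
  have cpd : ∀ i : Fin 3, Continuous (pd u i) := fun i => (hpdc i).continuous
  have cB : ∀ i : Fin 3, Continuous (fun x => fderiv ℝ (pd u i) x (Pi.single i 1)) := fun i =>
    (contDiff_fderiv_apply (hpdc i) _).continuous
  have capp : ∀ {f : V3 → V3}, Continuous f → ∀ j : Fin 3, Continuous fun x => f x j :=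
    fun hf j => (continuous_apply j).comp hf
  have clap : ∀ j : Fin 3, Continuous fun x => lap u x j := by
    intro j
    simp only [lap, Finset.sum_apply]
    exact continuous_finset_sum _ fun i _ => (capp (cB i) j)
  have cconv : ∀ j : Fin 3, Continuous fun x => conv u u x j := by
    intro j
    simp only [conv, Finset.sum_apply, Pi.smul_apply, smul_eq_mul]
    exact continuous_finset_sum _ fun i _ => (capp cu i).mul (capp (cpd i) j)
  have hcE : Continuous fun x =>
      dot (lap u x) (u x) + gradSq u x - dot (conv u u x) (u x) := by
    refine Continuous.sub (Continuous.add ?_ ?_) ?_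
    · exact continuous_finset_sum _ fun j _ => (clap j).mul (capp cu j)
    · exact continuous_finset_sum _ fun i _ =>
        continuous_finset_sum _ fun j _ => (capp (cpd i) j).pow 2
    · exact continuous_finset_sum _ fun j _ => (cconv j).mul (capp cu j)
  have hcgrad : Continuous fun x => gradSq u x :=
    continuous_finset_sum _ fun i _ =>
      continuous_finset_sum _ fun j _ => (capp (cpd i) j).pow 2
  have hcG : Continuous fun x => gN (normSq (u x)) * normSq (u x) := by
    have hns : Continuous fun x => normSq (u x) :=
      continuous_finset_sum _ fun j _ => (capp cu j).pow 2
    exact ((hg.1.continuous).comp hns).mul hns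
  have hmeas : MeasurableSet cube := measurableSet_Icc
  have hcomp : IsCompact cube := isCompact_Icc
  have hIE : IntegrableOn (fun x =>
      dot (lap u x) (u x) + gradSq u x - dot (conv u u x) (u x)) cube :=
    hcE.continuousOn.integrableOn_compact hcomp
  have hIgrad : IntegrableOn (fun x => gradSq u x) cube :=
    hcgrad.continuousOn.integrableOn_compact hcomp
  have hIG : IntegrableOn (fun x => gN (normSq (u x)) * normSq (u x)) cube :=
    hcG.continuousOn.integrableOn_compact hcomp
  have hptw : ∀ x : V3, dot (lap u x - conv u u x - gN (normSq (u x)) • u x) (u x)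
      = (dot (lap u x) (u x) + gradSq u x - dot (conv u u x) (u x)) - gradSq u x
        - gN (normSq (u x)) * normSq (u x) := by
    intro x
    simp only [dot, normSq, Pi.sub_apply, Pi.smul_apply, smul_eq_mul, sub_mul,
      Finset.sum_sub_distrib, Finset.mul_sum]
    have : ∑ j : Fin 3, gN (∑ j : Fin 3, u x j ^ 2) * u x j * u x j
        = ∑ j : Fin 3, gN (∑ j : Fin 3, u x j ^ 2) * u x j ^ 2 := by
      exact Finset.sum_congr rfl fun j _ => by ring
    rw [this]
    ring
  rw [setIntegral_congr_fun hmeas fun x _ => hptw x]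
  have hIE2 : IntegrableOn (fun x =>
      (dot (lap u x) (u x) + gradSq u x - dot (conv u u x) (u x)) - gradSq u x) cube :=
    hIE.sub hIgrad
  rw [integral_sub hIE2 hIG, integral_sub hIE hIgrad, integral_key u hu hp hdf]
  have hmono : Monotone gN := by
    obtain ⟨C₀, _, hd⟩ := hg.2.2.2
    exact monotone_of_deriv_nonneg (hg.1.differentiable (by simp)) fun r => (hd r).1
  have hgnn : ∀ r : ℝ, 0 ≤ gN r := by
    intro r
    rcases le_or_gt r N with h | h
    · rw [hg.2.1 r h]
    · have h0 : gN N = 0 := hg.2.1 N le_rfl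
      have h2 := hmono h.le
      rw [h0] at h2
      exact h2
  have h1 : 0 ≤ ∫ x in cube, gradSq u x :=
    setIntegral_nonneg hmeas fun x _ => Finset.sum_nonneg fun i _ => normSq_nonneg'' _
  have h2 : 0 ≤ ∫ x in cube, gN (normSq (u x)) * normSq (u x) :=
    setIntegral_nonneg hmeas fun x _ => mul_nonneg (hgnn _) (normSq_nonneg'' _)
  rw [zero_mul]
  linarith
end

section
/- Let g_N be a taming function with ν = 1. There exists a constant C₀ ≥ 1, depending only on g_N, such that for all smooth ℤ³-periodic divergence-free vector fields u₁, u₂ : ℝ³ → ℝ³, ∫_{[0,1]³} ⟨Δ(u₁ − u₂)(x) − ((u₁·∇)u₁ − (u₂·∇)u₂)(x) − (g_N(|u₁(x)|²)u₁(x) − g_N(|u₂(x)|²)u₂(x)), u₁(x) − u₂(x)⟩ dx ≤ −(1/2)‖u₁ − u₂‖_{H¹}² + C₀ (‖u₂‖_{H¹}‖u₂‖_{H²} + 1) ‖u₁ − u₂‖_{L²}². (This is the local monotonicity estimate ⟨F(u₁) − F(u₂), u₁ − u₂⟩_{H⁰} ≤ −½‖u₁−u₂‖²_{H¹} + C₀(‖u₂‖_{H¹}‖u₂‖_{H²}+1)‖u₁−u₂‖²_{H⁰}.)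 -/
open MeasureTheory

/-! ### Auxiliary material for the proof -/

namespace TamedAux

noncomputable section
open Set Finset

/-- Periodicity for scalar functions. -/
def PerS (f : V3 → ℝ) : Prop :=
  ∀ (x : V3) (k : Fin 3 → ℤ), f (x + fun i => (k i : ℝ)) = f x

/-! #### dot-product algebra -/

lemma dot_comm (a b : V3) : dot a b = dot b a := by
  simp [dot, mul_comm]

lemma dot_sum_left (s : Finset (Fin 3)) (a : Fin 3 → V3) (b : V3) :
    dot (∑ i ∈ s, a i) b = ∑ i ∈ s, dot (a i) b := by
  simp only [dot, Finset.sum_apply, Finset.sum_mul]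
  exact Finset.sum_comm

lemma dot_smul_left (c : ℝ) (a b : V3) : dot (c • a) b = c * dot a b := by
  simp [dot, Finset.mul_sum, mul_assoc]

lemma dot_sub_left (a b c : V3) : dot (a - b) c = dot a c - dot b c := by
  simp [dot, sub_mul, Finset.sum_sub_distrib]

lemma dot_add_left (a b c : V3) : dot (a + b) c = dot a c + dot b c := by
  simp [dot, add_mul, Finset.sum_add_distrib]

lemma normSq_eq_dot (a : V3) : normSq a = dot a a := by
  simp [dot, normSq, sq]

lemma normSq_nonneg (a : V3) : 0 ≤ normSq a :=
  Finset.sum_nonneg fun j _ => sq_nonneg _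

lemma normSq_add (a b : V3) : normSq (a + b) = normSq a + 2 * dot a b + normSq b := by
  simp only [normSq, dot, Pi.add_apply, Finset.mul_sum, ← Finset.sum_add_distrib]
  exact Finset.sum_congr rfl fun j _ => by ring

lemma dot_sq_le (a b : V3) : (dot a b) ^ 2 ≤ normSq a * normSq b :=
  Finset.sum_mul_sq_le_sq_mul_sq _ _ _

/-! #### smoothness helpers -/

lemma smooth_fderiv_apply {F : Type*} [NormedAddCommGroup F] [NormedSpace ℝ F]
    {f : V3 → F} (hf : ContDiff ℝ (⊤ : ℕ∞) f) (v : V3) :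
    ContDiff ℝ (⊤ : ℕ∞) (fun x => fderiv ℝ f x v) :=
  (ContinuousLinearMap.apply ℝ F v).contDiff.comp
    (hf.fderiv_right (m := ((⊤ : ℕ∞) : WithTop ℕ∞)) (by norm_cast))

lemma contDiff_pd {u : V3 → V3} (hu : ContDiff ℝ (⊤ : ℕ∞) u) (i : Fin 3) :
    ContDiff ℝ (⊤ : ℕ∞) (pd u i) :=
  smooth_fderiv_apply hu _

lemma cont_apply {f : V3 → V3} (hf : Continuous f) (j : Fin 3) :
    Continuous fun x => f x j := (continuous_apply j).comp hf

lemma contDiff_apply' {f : V3 → V3} (hf : ContDiff ℝ (⊤ : ℕ∞) f) (j : Fin 3) :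
    ContDiff ℝ (⊤ : ℕ∞) (fun x => f x j) :=
  (ContinuousLinearMap.proj (R := ℝ) (φ := fun _ : Fin 3 => ℝ) j).contDiff.comp hf

lemma contDiff_dot {f g : V3 → V3} (hf : ContDiff ℝ (⊤ : ℕ∞) f)
    (hg : ContDiff ℝ (⊤ : ℕ∞) g) :
    ContDiff ℝ (⊤ : ℕ∞) (fun x => dot (f x) (g x)) :=
  ContDiff.sum fun j _ => (contDiff_apply' hf j).mul (contDiff_apply' hg j)

lemma diffAt_apply {f : V3 → V3} {x : V3} (hf : DifferentiableAt ℝ f x) (j : Fin 3) :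
    DifferentiableAt ℝ (fun y => f y j) x :=
  (ContinuousLinearMap.proj (R := ℝ) (φ := fun _ : Fin 3 => ℝ) j).differentiableAt.comp x hf

lemma diffAt_dot {f g : V3 → V3} {x : V3} (hf : DifferentiableAt ℝ f x)
    (hg : DifferentiableAt ℝ g x) :
    DifferentiableAt ℝ (fun y => dot (f y) (g y)) x := by
  unfold dot
  exact DifferentiableAt.fun_sum fun j _ => (diffAt_apply hf j).mul (diffAt_apply hg j)

lemma cont_dot {f g : V3 → V3} (hf : Continuous f) (hg : Continuous g) :
    Continuous fun x => dot (f x) (g x) :=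
  continuous_finset_sum _ fun j _ => (cont_apply hf j).mul (cont_apply hg j)

lemma cont_normSq {f : V3 → V3} (hf : Continuous f) :
    Continuous fun x => normSq (f x) :=
  continuous_finset_sum _ fun j _ => (cont_apply hf j).pow 2

lemma cont_pd {u : V3 → V3} (hu : ContDiff ℝ (⊤ : ℕ∞) u) (i : Fin 3) :
    Continuous (pd u i) := (contDiff_pd hu i).continuous

lemma cont_lap {u : V3 → V3} (hu : ContDiff ℝ (⊤ : ℕ∞) u) : Continuous (lap u) := by
  have : Continuous fun x => ∑ i : Fin 3, fderiv ℝ (pd u i) x (Pi.single i 1) :=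
    continuous_finset_sum _ fun i _ => (smooth_fderiv_apply (contDiff_pd hu i) _).continuous
  exact this

lemma cont_conv {u v : V3 → V3} (hu : Continuous u) (hv : ContDiff ℝ (⊤ : ℕ∞) v) :
    Continuous (conv u v) := by
  have : Continuous fun x => ∑ i : Fin 3, u x i • pd v i x :=
    continuous_finset_sum _ fun i _ => (cont_apply hu i).smul (cont_pd hv i)
  exact this

lemma cont_gradSq {u : V3 → V3} (hu : ContDiff ℝ (⊤ : ℕ∞) u) :
    Continuous fun x => gradSq u x :=
  continuous_finset_sum _ fun i _ => cont_normSq (cont_pd hu i)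

/-! #### periodicity helpers -/

lemma fderiv_periodic {u : V3 → V3} (hu : Differentiable ℝ u) (hp : IsPeriodic u)
    (x : V3) (k : Fin 3 → ℤ) :
    fderiv ℝ u (x + fun i => (k i : ℝ)) = fderiv ℝ u x := by
  set c : V3 := fun i => (k i : ℝ) with hc
  have h1 : (fun y => u (y + c)) = u := funext fun y => hp y k
  have h2 : HasFDerivAt (fun y => u (y + c)) (fderiv ℝ u (x + c)) x := by
    have := (hu (x + c)).hasFDerivAt.comp x ((hasFDerivAt_id x).add_const c)
    simpa [Function.comp] using this
  rw [h1] at h2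
  exact h2.fderiv.symm

lemma pd_periodic {u : V3 → V3} (hu : Differentiable ℝ u) (hp : IsPeriodic u)
    (i : Fin 3) (x : V3) (k : Fin 3 → ℤ) :
    pd u i (x + fun j => (k j : ℝ)) = pd u i x := by
  unfold pd
  rw [fderiv_periodic hu hp x k]

/-! #### the flux lemma -/

lemma flux_zero (Φ : Fin 3 → V3 → ℝ) (hΦ : ∀ i, ContDiff ℝ (⊤ : ℕ∞) (Φ i))
    (hp : ∀ i, PerS (Φ i)) :
    (∫ x in cube, ∑ i : Fin 3, fderiv ℝ (Φ i) x (Pi.single i 1)) = 0 := by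
  have hdiff : ∀ i, Differentiable ℝ (Φ i) :=
    fun i => (hΦ i).differentiable (by simp)
  have hcont : Continuous fun x => ∑ i : Fin 3, fderiv ℝ (Φ i) x (Pi.single i 1) :=
    continuous_finset_sum _ fun i _ => (smooth_fderiv_apply (hΦ i) _).continuous
  have h := integral_divergence_of_hasFDerivAt_off_countable' (n := 2)
    (0 : Fin 3 → ℝ) 1 zero_le_one Φ (fun i x => fderiv ℝ (Φ i) x)
    ∅ countable_empty (fun i => (hΦ i).continuous.continuousOn)
    (fun x _ i => ((hdiff i) x).hasFDerivAt)
    (hcont.continuousOn.integrableOn_compact isCompact_Icc)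
  rw [show (Set.Icc (0 : Fin 3 → ℝ) 1) = cube from rfl] at h
  rw [h]
  refine Finset.sum_eq_zero fun i _ => ?_
  rw [sub_eq_zero]
  refine setIntegral_congr_fun measurableSet_Icc fun x _ => ?_
  have key : Fin.insertNth i ((1 : Fin 3 → ℝ) i) x
      = Fin.insertNth i ((0 : Fin 3 → ℝ) i) x + fun j => ((Pi.single i 1 : Fin 3 → ℤ) j : ℝ) := by
    funext j
    refine Fin.succAboveCases i ?_ ?_ j
    · simp
    · intro m
      simp [Fin.insertNth_apply_succAbove, Pi.single_eq_of_ne (Fin.succAbove_ne i m)]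
  rw [key, hp i]

/-! #### directional derivative of a dot product -/

lemma fderiv_apply_proj {f : V3 → V3} {x : V3} (hf : DifferentiableAt ℝ f x) (j : Fin 3)
    (v : V3) : fderiv ℝ (fun y => f y j) x v = fderiv ℝ f x v j := by
  have h : (fun y => f y j)
      = (ContinuousLinearMap.proj (R := ℝ) (φ := fun _ : Fin 3 => ℝ) j) ∘ f := rfl
  rw [h, fderiv_comp x (ContinuousLinearMap.differentiableAt _) hf]
  simp

lemma fderiv_dot {f g : V3 → V3} {x : V3} (hf : DifferentiableAt ℝ f x)
    (hg : DifferentiableAt ℝ g x) (v : V3) :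
    fderiv ℝ (fun y => dot (f y) (g y)) x v
      = dot (fderiv ℝ f x v) (g x) + dot (f x) (fderiv ℝ g x v) := by
  have h : ∀ j ∈ Finset.univ (α := Fin 3),
      DifferentiableAt ℝ (fun y => f y j * g y j) x :=
    fun j _ => (diffAt_apply hf j).mul (diffAt_apply hg j)
  simp only [dot]
  rw [fderiv_fun_sum h]
  rw [ContinuousLinearMap.sum_apply, ← Finset.sum_add_distrib]
  refine Finset.sum_congr rfl fun j _ => ?_
  rw [fderiv_fun_mul (diffAt_apply hf j) (diffAt_apply hg j)]
  simp [fderiv_apply_proj hf j v, fderiv_apply_proj hg j v]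
  ring

/-! #### taming function: the key scalar inequality -/

lemma taming_key {N M : ℝ} {g : ℝ → ℝ} (hgs : ContDiff ℝ (⊤ : ℕ∞) g)
    (hlb : ∀ r, r - M ≤ g r) (hd0 : ∀ r, 0 ≤ deriv g r)
    (h1 : ∀ r, N + 1 < r → deriv g r = 1) (hMN : N + 1 ≤ M) (hM : 0 ≤ M)
    {A B s : ℝ} (hA : 0 ≤ A) (hB : 0 ≤ B) (hs : s ^ 2 ≤ A * B) :
    (1 / 2) * (A * B) ≤ g (A + 2 * s + B) * (s + B) - g A * s + 3 * M * B := by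
  have hgd : Differentiable ℝ g := hgs.differentiable (by simp)
  set q : ℝ → ℝ := fun t => A + 2 * s * t + B * t ^ 2 with hqdef
  set φ : ℝ → ℝ := fun t => g (q t) * (s + B * t) with hφdef
  have hq : ∀ t : ℝ, HasDerivAt q (2 * s + 2 * B * t) t := by
    intro t
    have h := (((hasDerivAt_id t).const_mul (2 * s)).const_add A).fun_add
      ((hasDerivAt_pow 2 t).const_mul B)
    refine h.congr_deriv ?_
    push_cast; ring
  have hlin : ∀ t : ℝ, HasDerivAt (fun t : ℝ => s + B * t) B t := by
    intro t
    simpa using ((hasDerivAt_id t).const_mul B).const_add s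
  have hφ : ∀ t : ℝ, HasDerivAt φ
      (deriv g (q t) * (2 * s + 2 * B * t) * (s + B * t) + g (q t) * B) t := by
    intro t
    exact ((hgd (q t)).hasDerivAt.comp t (hq t)).mul (hlin t)
  set Ψ : ℝ → ℝ := fun t =>
    (A * t + s * t ^ 2 + B * t ^ 3 / 3) * B + 2 * (s ^ 2 * t + s * B * t ^ 2 + B ^ 2 * t ^ 3 / 3)
      - 3 * M * B * t with hΨdef
  have hΨ : ∀ t : ℝ, HasDerivAt Ψ (q t * B + 2 * (s + B * t) ^ 2 - 3 * M * B) t := by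
    intro t
    have h1' : HasDerivAt (fun t : ℝ => A * t + s * t ^ 2 + B * t ^ 3 / 3)
        (A + s * (2 * t) + B * (3 * t ^ 2) / 3) t := by
      have := (((hasDerivAt_id t).const_mul A).fun_add ((hasDerivAt_pow 2 t).const_mul s)).fun_add
        (((hasDerivAt_pow 3 t).const_mul B).div_const 3)
      refine this.congr_deriv ?_
      push_cast; ring
    have h2' : HasDerivAt (fun t : ℝ => 2 * (s ^ 2 * t + s * B * t ^ 2 + B ^ 2 * t ^ 3 / 3))
        (2 * (s ^ 2 + s * B * (2 * t) + B ^ 2 * (3 * t ^ 2) / 3)) t := by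
      have := ((((hasDerivAt_id t).const_mul (s ^ 2)).fun_add
        ((hasDerivAt_pow 2 t).const_mul (s * B))).fun_add
        (((hasDerivAt_pow 3 t).const_mul (B ^ 2)).div_const 3)).const_mul 2
      refine this.congr_deriv ?_
      push_cast; ring
    have h3' : HasDerivAt (fun t : ℝ => 3 * M * B * t) (3 * M * B) t := by
      simpa using (hasDerivAt_id t).const_mul (3 * M * B)
    have h := ((h1'.mul_const B).fun_add h2').fun_sub h3'
    refine h.congr_deriv ?_
    simp only [hqdef]
    ring
  have hpoint : ∀ t : ℝ, 0 ≤ t → t ≤ 1 →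
      q t * B + 2 * (s + B * t) ^ 2 - 3 * M * B
        ≤ deriv g (q t) * (2 * s + 2 * B * t) * (s + B * t) + g (q t) * B := by
    intro t ht0 ht1
    have hc2 : (s + B * t) ^ 2 ≤ q t * B := by
      show (s + B * t) ^ 2 ≤ (A + 2 * s * t + B * t ^ 2) * B
      nlinarith [hs]
    have hrw : deriv g (q t) * (2 * s + 2 * B * t) * (s + B * t)
        = 2 * deriv g (q t) * (s + B * t) ^ 2 := by ring
    rw [hrw]
    rcases le_or_gt (q t) (N + 1) with hcase | hcase
    · have hgg : q t - M ≤ g (q t) := hlb _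
      have hc2' : (s + B * t) ^ 2 ≤ M * B := by
        refine hc2.trans ?_
        apply mul_le_mul_of_nonneg_right (hcase.trans hMN) hB
      nlinarith [mul_nonneg (hd0 (q t)) (sq_nonneg (s + B * t)), hB,
        mul_le_mul_of_nonneg_right hgg hB, hc2']
    · have hgg : q t - M ≤ g (q t) := hlb _
      rw [h1 _ hcase]
      nlinarith [mul_le_mul_of_nonneg_right hgg hB, mul_nonneg hM hB]
  have hφcont : Continuous φ := by
    rw [continuous_iff_continuousAt]; exact fun t => (hφ t).continuousAt
  have hΨcont : Continuous Ψ := by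
    rw [continuous_iff_continuousAt]; exact fun t => (hΨ t).continuousAt
  have hmono : MonotoneOn (fun t => φ t - Ψ t) (Icc (0 : ℝ) 1) := by
    refine monotoneOn_of_deriv_nonneg (convex_Icc 0 1)
      (hφcont.sub hΨcont).continuousOn
      (fun t _ => ((hφ t).sub (hΨ t)).differentiableAt.differentiableWithinAt) ?_
    intro t ht
    rw [interior_Icc] at ht
    rw [((hφ t).fun_sub (hΨ t)).deriv]
    have := hpoint t ht.1.le ht.2.le
    linarith
  have h01 := hmono (left_mem_Icc.2 zero_le_one) (right_mem_Icc.2 zero_le_one) zero_le_one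
  have hφ1 : φ 1 = g (A + 2 * s + B) * (s + B) := by
    show g (A + 2 * s * 1 + B * 1 ^ 2) * (s + B * 1) = _
    norm_num
  have hφ0 : φ 0 = g A * s := by
    show g (A + 2 * s * 0 + B * 0 ^ 2) * (s + B * 0) = _
    norm_num
  have hΨv : Ψ 1 - Ψ 0 = A * B + 3 * s * B + 2 * s ^ 2 + B ^ 2 - 3 * M * B := by
    show ((A * 1 + s * 1 ^ 2 + B * 1 ^ 3 / 3) * B
        + 2 * (s ^ 2 * 1 + s * B * 1 ^ 2 + B ^ 2 * 1 ^ 3 / 3) - 3 * M * B * 1)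
      - ((A * 0 + s * 0 ^ 2 + B * 0 ^ 3 / 3) * B
        + 2 * (s ^ 2 * 0 + s * B * 0 ^ 2 + B ^ 2 * 0 ^ 3 / 3) - 3 * M * B * 0) = _
    ring
  simp only [hφ1, hφ0] at h01
  nlinarith [h01, hΨv, hs, sq_nonneg (5 * s + 3 * B), hB]

end
end TamedAux

/-- Local monotonicity of the tamed Navier–Stokes drift in `L²`:
`⟨F(u₁) - F(u₂), u₁ - u₂⟩_{H⁰} ≤ -½‖u₁-u₂‖²_{H¹} + C₀(‖u₂‖_{H¹}‖u₂‖_{H²} + 1)‖u₁-u₂‖²_{L²}`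
with a constant `C₀ ≥ 1` depending only on `g_N`. -/
theorem tamed_drift_local_monotonicity (N : ℝ) (gN : ℝ → ℝ) (hg : IsTaming N gN) :
    ∃ C₀ : ℝ, 1 ≤ C₀ ∧ ∀ u₁ u₂ : V3 → V3,
      ContDiff ℝ (⊤ : ℕ∞) u₁ → IsPeriodic u₁ → IsDivFree u₁ →
      ContDiff ℝ (⊤ : ℕ∞) u₂ → IsPeriodic u₂ → IsDivFree u₂ →
      (∫ x in cube,
          dot (lap (fun y => u₁ y - u₂ y) x - (conv u₁ u₁ x - conv u₂ u₂ x) -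
                (gN (normSq (u₁ x)) • u₁ x - gN (normSq (u₂ x)) • u₂ x))
              (u₁ x - u₂ x)) ≤
        -(1/2) * h1sq (fun y => u₁ y - u₂ y) +
          C₀ * (Real.sqrt (h1sq u₂) * Real.sqrt (h2sq u₂) + 1) *
            l2sq (fun y => u₁ y - u₂ y) := by
  classical
  open TamedAux in
  obtain ⟨hgs, hgN0, hgN1, C', hC', hCd⟩ := hg
  set M : ℝ := max (N + 1) 0 with hMdef
  have hM0 : (0:ℝ) ≤ M := le_max_right _ _
  have hMN : N + 1 ≤ M := le_max_left _ _
  have hgd : Differentiable ℝ gN := hgs.differentiable (by simp)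
  have hgmono : Monotone gN := monotone_of_deriv_nonneg hgd fun r => (hCd r).1
  have hg0 : ∀ r, 0 ≤ gN r := by
    intro r
    rcases le_total r N with h | h
    · exact (hgN0 r h).ge
    · rw [← hgN0 N le_rfl]; exact hgmono h
  have hlb : ∀ r, r - M ≤ gN r := by
    intro r
    rcases le_or_gt (N + 1) r with h | h
    · rw [hgN1 r h]; linarith
    · have := hg0 r; linarith
  have hder1 : ∀ r, N + 1 < r → deriv gN r = 1 := by
    intro r hr
    have hev : gN =ᶠ[nhds r] fun z => z - N :=
      Filter.eventuallyEq_of_mem (isOpen_Ioi.mem_nhds hr) fun z hz => hgN1 z (le_of_lt hz)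
    rw [hev.deriv_eq]
    simp
  refine ⟨3 * M + 1, by linarith, ?_⟩
  intro u₁ u₂ hu₁ hp₁ hd₁ hu₂ hp₂ hd₂
  set w : V3 → V3 := fun y => u₁ y - u₂ y with hwdef
  have hw : ContDiff ℝ (⊤:ℕ∞) w := hu₁.sub hu₂
  have hu₁d : Differentiable ℝ u₁ := hu₁.differentiable (by simp)
  have hu₂d : Differentiable ℝ u₂ := hu₂.differentiable (by simp)
  have hwd : Differentiable ℝ w := hu₁d.sub hu₂d
  have hwp : IsPeriodic w := by
    intro x k
    show u₁ (x + fun i => (k i : ℝ)) - u₂ (x + fun i => (k i : ℝ)) = _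
    rw [hp₁ x k, hp₂ x k]
  have hpdw : ∀ (i : Fin 3) (x : V3), pd w i x = pd u₁ i x - pd u₂ i x := by
    intro i x
    show fderiv ℝ (fun y => u₁ y - u₂ y) x (Pi.single i 1) = _
    rw [fderiv_fun_sub (hu₁d x) (hu₂d x)]
    rfl
  have hdivw : ∀ x, ∑ i : Fin 3, pd w i x i = 0 := by
    intro x
    simp only [hpdw, Pi.sub_apply]
    rw [Finset.sum_sub_distrib, hd₁ x, hd₂ x, sub_zero]
  have hpdper : ∀ (u : V3 → V3), Differentiable ℝ u → IsPeriodic u →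
      ∀ (i : Fin 3) (x : V3) (k : Fin 3 → ℤ),
        pd u i (x + fun j => (k j : ℝ)) = pd u i x :=
    fun u hud hup i x k => pd_periodic hud hup i x k
  -- integrability from continuity
  have int_of_cont : ∀ {f : V3 → ℝ}, Continuous f → IntegrableOn f cube :=
    fun h => h.continuousOn.integrableOn_compact isCompact_Icc
  have hcw : Continuous w := hw.continuous
  have hcu₁ : Continuous u₁ := hu₁.continuous
  have hcu₂ : Continuous u₂ := hu₂.continuous
  -- the three flux identities
  have hconvdot : ∀ (a b : V3 → V3) (x : V3) (v : V3),
      dot (conv a b x) v = ∑ i : Fin 3, a x i * dot (pd b i x) v := by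
    intro a b x v
    show dot (∑ i : Fin 3, a x i • pd b i x) v = _
    rw [dot_sum_left]
    exact Finset.sum_congr rfl fun i _ => dot_smul_left _ _ _
  have hdiffpd : ∀ i : Fin 3, Differentiable ℝ (pd w i) :=
    fun i => (contDiff_pd hw i).differentiable (by simp)
  -- Flux 1 : ∫ ⟨Δw, w⟩ + |∇w|² = 0
  have hP1 : (∫ x in cube, (dot (lap w x) (w x) + gradSq w x)) = 0 := by
    have hid : ∀ x, dot (lap w x) (w x) + gradSq w x
        = ∑ i : Fin 3, fderiv ℝ (fun y => dot (pd w i y) (w y)) x (Pi.single i 1) := by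
      intro x
      have hterm : ∀ i : Fin 3,
          fderiv ℝ (fun y => dot (pd w i y) (w y)) x (Pi.single i 1)
            = dot (fderiv ℝ (pd w i) x (Pi.single i 1)) (w x) + normSq (pd w i x) := by
        intro i
        rw [fderiv_dot (hdiffpd i x) (hwd x)]
        rw [show fderiv ℝ w x (Pi.single i 1) = pd w i x from rfl, ← normSq_eq_dot]
      rw [Finset.sum_congr rfl fun i _ => hterm i, Finset.sum_add_distrib, ← dot_sum_left]
      rfl
    rw [show (fun x => dot (lap w x) (w x) + gradSq w x)
        = fun x => ∑ i : Fin 3, fderiv ℝ (fun y => dot (pd w i y) (w y)) x (Pi.single i 1)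
      from funext hid]
    refine flux_zero _ (fun i => contDiff_dot (contDiff_pd hw i) hw) ?_
    intro i x k
    show dot (pd w i (x + fun j => (k j : ℝ))) (w (x + fun j => (k j : ℝ))) = _
    rw [hpdper w hwd hwp i x k, hwp x k]
  -- Flux 2 : ∫ ⟨(u₁·∇)w, w⟩ = 0
  have hP2 : (∫ x in cube, dot (conv u₁ w x) (w x)) = 0 := by
    have hid : ∀ x, 2 * dot (conv u₁ w x) (w x)
        = ∑ i : Fin 3, fderiv ℝ (fun y => u₁ y i * dot (w y) (w y)) x (Pi.single i 1) := by
      intro x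
      have hterm : ∀ i : Fin 3,
          fderiv ℝ (fun y => u₁ y i * dot (w y) (w y)) x (Pi.single i 1)
            = u₁ x i * (2 * dot (pd w i x) (w x)) + dot (w x) (w x) * pd u₁ i x i := by
        intro i
        rw [fderiv_fun_mul (diffAt_apply (hu₁d x) i) (diffAt_dot (hwd x) (hwd x))]
        simp only [ContinuousLinearMap.add_apply, ContinuousLinearMap.coe_smul',
          Pi.smul_apply, smul_eq_mul]
        rw [fderiv_dot (hwd x) (hwd x), fderiv_apply_proj (hu₁d x) i]
        rw [show fderiv ℝ w x (Pi.single i 1) = pd w i x from rfl,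
          show fderiv ℝ u₁ x (Pi.single i 1) i = pd u₁ i x i from rfl]
        rw [dot_comm (w x) (pd w i x)]
        ring
      rw [Finset.sum_congr rfl fun i _ => hterm i, Finset.sum_add_distrib,
        ← Finset.mul_sum, hd₁ x, mul_zero, add_zero, hconvdot, Finset.mul_sum]
      exact Finset.sum_congr rfl fun i _ => by ring
    have h2 : (∫ x in cube, 2 * dot (conv u₁ w x) (w x)) = 0 := by
      rw [show (fun x => 2 * dot (conv u₁ w x) (w x))
          = fun x => ∑ i : Fin 3, fderiv ℝ (fun y => u₁ y i * dot (w y) (w y)) x (Pi.single i 1)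
        from funext hid]
      refine flux_zero _
        (fun i => (contDiff_apply' hu₁ i).mul (contDiff_dot hw hw)) ?_
      intro i x k
      show u₁ (x + fun j => (k j : ℝ)) i
          * dot (w (x + fun j => (k j : ℝ))) (w (x + fun j => (k j : ℝ))) = _
      rw [hp₁ x k, hwp x k]
    rw [integral_const_mul] at h2
    linarith
  -- Flux 3 : ∫ ⟨(w·∇)u₂, w⟩ + ⟨(w·∇)w, u₂⟩ = 0
  have hP3 : (∫ x in cube, (dot (conv w u₂ x) (w x) + dot (conv w w x) (u₂ x))) = 0 := by
    have hid : ∀ x, dot (conv w u₂ x) (w x) + dot (conv w w x) (u₂ x)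
        = ∑ i : Fin 3, fderiv ℝ (fun y => w y i * dot (u₂ y) (w y)) x (Pi.single i 1) := by
      intro x
      have hterm : ∀ i : Fin 3,
          fderiv ℝ (fun y => w y i * dot (u₂ y) (w y)) x (Pi.single i 1)
            = w x i * (dot (pd u₂ i x) (w x) + dot (pd w i x) (u₂ x))
              + dot (u₂ x) (w x) * pd w i x i := by
        intro i
        rw [fderiv_fun_mul (diffAt_apply (hwd x) i) (diffAt_dot (hu₂d x) (hwd x))]
        simp only [ContinuousLinearMap.add_apply, ContinuousLinearMap.coe_smul',
          Pi.smul_apply, smul_eq_mul]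
        rw [fderiv_dot (hu₂d x) (hwd x), fderiv_apply_proj (hwd x) i]
        rw [show fderiv ℝ w x (Pi.single i 1) = pd w i x from rfl,
          show fderiv ℝ u₂ x (Pi.single i 1) = pd u₂ i x from rfl]
        rw [dot_comm (u₂ x) (pd w i x)]
        try ring
      rw [Finset.sum_congr rfl fun i _ => hterm i, Finset.sum_add_distrib,
        ← Finset.mul_sum, hdivw x, mul_zero, add_zero]
      rw [hconvdot, hconvdot]
      rw [← Finset.sum_add_distrib]
      exact Finset.sum_congr rfl fun i _ => by ring
    rw [show (fun x => dot (conv w u₂ x) (w x) + dot (conv w w x) (u₂ x))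
        = fun x => ∑ i : Fin 3, fderiv ℝ (fun y => w y i * dot (u₂ y) (w y)) x (Pi.single i 1)
      from funext hid]
    refine flux_zero _
      (fun i => (contDiff_apply' hw i).mul (contDiff_dot hu₂ hw)) ?_
    intro i x k
    show w (x + fun j => (k j : ℝ)) i
        * dot (u₂ (x + fun j => (k j : ℝ))) (w (x + fun j => (k j : ℝ))) = _
    rw [hwp x k, hp₂ x k]
  -- convection splitting
  have hconvsplit : ∀ x, conv u₁ u₁ x - conv u₂ u₂ x = conv u₁ w x + conv w u₂ x := by
    intro x
    funext j
    show (∑ i : Fin 3, u₁ x i • pd u₁ i x) j - (∑ i : Fin 3, u₂ x i • pd u₂ i x) j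
      = (∑ i : Fin 3, u₁ x i • pd w i x) j + (∑ i : Fin 3, w x i • pd u₂ i x) j
    simp only [Finset.sum_apply, Pi.smul_apply, smul_eq_mul]
    rw [← Finset.sum_sub_distrib, ← Finset.sum_add_distrib]
    refine Finset.sum_congr rfl fun i _ => ?_
    rw [hpdw i x]
    show u₁ x i * pd u₁ i x j - u₂ x i * pd u₂ i x j
      = u₁ x i * ((pd u₁ i x - pd u₂ i x) j) + (u₁ x i - u₂ x i) * pd u₂ i x j
    simp only [Pi.sub_apply]
    ring
  -- pointwise Cauchy–Schwarz bound for the cubic convection term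
  have hCS : ∀ x, dot (conv w w x) (u₂ x)
      ≤ (1/2) * gradSq w x + (1/2) * (normSq (u₂ x) * normSq (w x)) := by
    intro x
    have h1 : (dot (conv w w x) (u₂ x))^2 ≤ normSq (conv w w x) * normSq (u₂ x) :=
      dot_sq_le _ _
    have h2 : normSq (conv w w x) ≤ normSq (w x) * gradSq w x := by
      have hj : ∀ j : Fin 3, (conv w w x j)^2
          ≤ normSq (w x) * ∑ i : Fin 3, (pd w i x j)^2 := by
        intro j
        have h := Finset.sum_mul_sq_le_sq_mul_sq Finset.univ
          (fun i => w x i) (fun i => pd w i x j)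
        have hc : conv w w x j = ∑ i : Fin 3, w x i * pd w i x j := by
          show (∑ i : Fin 3, w x i • pd w i x) j = _
          simp [Finset.sum_apply]
        rw [hc]
        simpa [normSq] using h
      calc normSq (conv w w x) = ∑ j : Fin 3, (conv w w x j)^2 := rfl
        _ ≤ ∑ j : Fin 3, normSq (w x) * ∑ i : Fin 3, (pd w i x j)^2 :=
            Finset.sum_le_sum fun j _ => hj j
        _ = normSq (w x) * gradSq w x := by
            rw [← Finset.mul_sum]
            congr 1
            rw [Finset.sum_comm]
            rfl
    have hp2 : (dot (conv w w x) (u₂ x))^2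
        ≤ gradSq w x * (normSq (u₂ x) * normSq (w x)) := by
      calc (dot (conv w w x) (u₂ x))^2 ≤ normSq (conv w w x) * normSq (u₂ x) := h1
        _ ≤ (normSq (w x) * gradSq w x) * normSq (u₂ x) :=
            mul_le_mul_of_nonneg_right h2 (normSq_nonneg _)
        _ = gradSq w x * (normSq (u₂ x) * normSq (w x)) := by ring
    have hX : 0 ≤ gradSq w x := Finset.sum_nonneg fun i _ => normSq_nonneg _
    have hY : 0 ≤ normSq (u₂ x) * normSq (w x) :=
      mul_nonneg (normSq_nonneg _) (normSq_nonneg _)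
    nlinarith [hp2, hX, hY, sq_nonneg (gradSq w x - normSq (u₂ x) * normSq (w x))]
  -- pointwise taming bound
  have htame : ∀ x, (1/2) * (normSq (u₂ x) * normSq (w x))
      ≤ dot (gN (normSq (u₁ x)) • u₁ x - gN (normSq (u₂ x)) • u₂ x) (w x)
        + 3 * M * normSq (w x) := by
    intro x
    have hu1x : u₁ x = u₂ x + w x := by
      funext j
      show u₁ x j = u₂ x j + (u₁ x j - u₂ x j)
      ring
    have hs : (dot (u₂ x) (w x))^2 ≤ normSq (u₂ x) * normSq (w x) := dot_sq_le _ _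
    have hkey := taming_key (N := N) hgs hlb (fun r => (hCd r).1) hder1 hMN hM0
      (normSq_nonneg (u₂ x)) (normSq_nonneg (w x)) hs
    have e1 : normSq (u₁ x) = normSq (u₂ x) + 2 * dot (u₂ x) (w x) + normSq (w x) := by
      rw [hu1x, normSq_add]
    have e2 : dot (u₁ x) (w x) = dot (u₂ x) (w x) + normSq (w x) := by
      rw [hu1x, dot_add_left, ← normSq_eq_dot]
    rw [dot_sub_left, dot_smul_left, dot_smul_left, e1, e2]
    exact hkey
  -- main pointwise identity
  have hIeq : ∀ x,
      dot (lap w x - (conv u₁ u₁ x - conv u₂ u₂ x) -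
            (gN (normSq (u₁ x)) • u₁ x - gN (normSq (u₂ x)) • u₂ x)) (u₁ x - u₂ x)
        = (dot (lap w x) (w x) + gradSq w x)
          - dot (conv u₁ w x) (w x)
          - (dot (conv w u₂ x) (w x) + dot (conv w w x) (u₂ x))
          + (dot (conv w w x) (u₂ x) - gradSq w x
             - dot (gN (normSq (u₁ x)) • u₁ x - gN (normSq (u₂ x)) • u₂ x) (w x)) := by
    intro x
    show dot (lap w x - (conv u₁ u₁ x - conv u₂ u₂ x) -
            (gN (normSq (u₁ x)) • u₁ x - gN (normSq (u₂ x)) • u₂ x)) (w x) = _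
    rw [dot_sub_left, dot_sub_left, hconvsplit x, dot_add_left]
    ring
  -- continuity of all pieces
  have hcT : Continuous fun x =>
      dot (gN (normSq (u₁ x)) • u₁ x - gN (normSq (u₂ x)) • u₂ x) (w x) :=
    cont_dot (((hgs.continuous.comp (cont_normSq hcu₁)).smul hcu₁).sub
      ((hgs.continuous.comp (cont_normSq hcu₂)).smul hcu₂)) hcw
  have hcA1 : Continuous fun x => dot (lap w x) (w x) + gradSq w x :=
    (cont_dot (cont_lap hw) hcw).add (cont_gradSq hw)
  have hcA2 : Continuous fun x => dot (conv u₁ w x) (w x) :=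
    cont_dot (cont_conv hcu₁ hw) hcw
  have hcA3 : Continuous fun x => dot (conv w u₂ x) (w x) + dot (conv w w x) (u₂ x) :=
    (cont_dot (cont_conv hcw hu₂) hcw).add (cont_dot (cont_conv hcw hw) hcu₂)
  have hcR : Continuous fun x => dot (conv w w x) (u₂ x) - gradSq w x
      - dot (gN (normSq (u₁ x)) • u₁ x - gN (normSq (u₂ x)) • u₂ x) (w x) :=
    ((cont_dot (cont_conv hcw hw) hcu₂).sub (cont_gradSq hw)).sub hcT
  have hcns : Continuous fun x => normSq (w x) := cont_normSq hcw
  have hcgs : Continuous fun x => gradSq w x := cont_gradSq hw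
  -- split the integral
  have eI : (∫ x in cube,
      dot (lap w x - (conv u₁ u₁ x - conv u₂ u₂ x) -
            (gN (normSq (u₁ x)) • u₁ x - gN (normSq (u₂ x)) • u₂ x)) (u₁ x - u₂ x))
      = ∫ x in cube,
        ((dot (lap w x) (w x) + gradSq w x)
          - dot (conv u₁ w x) (w x)
          - (dot (conv w u₂ x) (w x) + dot (conv w w x) (u₂ x))
          + (dot (conv w w x) (u₂ x) - gradSq w x
             - dot (gN (normSq (u₁ x)) • u₁ x - gN (normSq (u₂ x)) • u₂ x) (w x))) :=
    setIntegral_congr_fun measurableSet_Icc fun x _ => hIeq x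
  have eG : (∫ x in cube,
      ((dot (lap w x) (w x) + gradSq w x)
        - dot (conv u₁ w x) (w x)
        - (dot (conv w u₂ x) (w x) + dot (conv w w x) (u₂ x))
        + (dot (conv w w x) (u₂ x) - gradSq w x
           - dot (gN (normSq (u₁ x)) • u₁ x - gN (normSq (u₂ x)) • u₂ x) (w x))))
      = (∫ x in cube, ((dot (lap w x) (w x) + gradSq w x)
          - dot (conv u₁ w x) (w x)
          - (dot (conv w u₂ x) (w x) + dot (conv w w x) (u₂ x))))
        + (∫ x in cube, (dot (conv w w x) (u₂ x) - gradSq w x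
           - dot (gN (normSq (u₁ x)) • u₁ x - gN (normSq (u₂ x)) • u₂ x) (w x))) :=
    MeasureTheory.integral_add
      (((int_of_cont hcA1).sub (int_of_cont hcA2)).sub (int_of_cont hcA3))
      (int_of_cont hcR)
  have eG2 : (∫ x in cube, ((dot (lap w x) (w x) + gradSq w x)
          - dot (conv u₁ w x) (w x)
          - (dot (conv w u₂ x) (w x) + dot (conv w w x) (u₂ x))))
      = (∫ x in cube, ((dot (lap w x) (w x) + gradSq w x)
          - dot (conv u₁ w x) (w x)))
        - (∫ x in cube, (dot (conv w u₂ x) (w x) + dot (conv w w x) (u₂ x))) :=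
    MeasureTheory.integral_sub ((int_of_cont hcA1).sub (int_of_cont hcA2))
      (int_of_cont hcA3)
  have eG3 : (∫ x in cube, ((dot (lap w x) (w x) + gradSq w x)
          - dot (conv u₁ w x) (w x)))
      = (∫ x in cube, (dot (lap w x) (w x) + gradSq w x))
        - (∫ x in cube, dot (conv u₁ w x) (w x)) :=
    MeasureTheory.integral_sub (int_of_cont hcA1) (int_of_cont hcA2)
  -- bound the remainder integral
  have hRle : (∫ x in cube, (dot (conv w w x) (u₂ x) - gradSq w x
        - dot (gN (normSq (u₁ x)) • u₁ x - gN (normSq (u₂ x)) • u₂ x) (w x)))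
      ≤ ∫ x in cube, (-(1/2) * gradSq w x + (3 * M) * normSq (w x)) := by
    refine setIntegral_mono_on (int_of_cont hcR)
      (int_of_cont ((continuous_const.mul hcgs).add (continuous_const.mul hcns)))
      measurableSet_Icc ?_
    intro x _
    have h1 := hCS x
    have h2 := htame x
    linarith
  have hbval : (∫ x in cube, (-(1/2) * gradSq w x + (3 * M) * normSq (w x)))
      = -(1/2) * (∫ x in cube, gradSq w x) + (3 * M) * (∫ x in cube, normSq (w x)) := by
    rw [MeasureTheory.integral_add (int_of_cont (continuous_const.fun_mul hcgs))
      (int_of_cont (continuous_const.fun_mul hcns)), integral_const_mul, integral_const_mul]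
  have hh1 : h1sq w = (∫ x in cube, normSq (w x)) + (∫ x in cube, gradSq w x) := by
    unfold h1sq
    rw [MeasureTheory.integral_add (int_of_cont hcns) (int_of_cont hcgs)]
  have hl2 : l2sq w = ∫ x in cube, normSq (w x) := rfl
  have hl2nn : 0 ≤ l2sq w :=
    setIntegral_nonneg measurableSet_Icc fun x _ => normSq_nonneg _
  have hSnn : 0 ≤ Real.sqrt (h1sq u₂) * Real.sqrt (h2sq u₂) :=
    mul_nonneg (Real.sqrt_nonneg _) (Real.sqrt_nonneg _)
  rw [eI, eG, eG2, eG3, hP1, hP2, hP3]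
  have hfin : (0:ℝ) - 0 - 0 + (∫ x in cube, (dot (conv w w x) (u₂ x) - gradSq w x
        - dot (gN (normSq (u₁ x)) • u₁ x - gN (normSq (u₂ x)) • u₂ x) (w x)))
      ≤ -(1/2) * (∫ x in cube, gradSq w x) + (3 * M) * (∫ x in cube, normSq (w x)) := by
    rw [← hbval]
    linarith [hRle]
  refine hfin.trans ?_
  rw [← hl2]
  have hexp : -(1/2) * (∫ x in cube, gradSq w x)
      = -(1/2) * h1sq w + (1/2) * l2sq w := by
    rw [hh1, hl2]; ring
  rw [hexp]
  have hfactor : (1/2) * l2sq w + 3 * M * l2sq w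
      ≤ (3 * M + 1) * (Real.sqrt (h1sq u₂) * Real.sqrt (h2sq u₂) + 1) * l2sq w := by
    nlinarith [mul_nonneg (mul_nonneg (by linarith : (0:ℝ) ≤ 3 * M + 1) hSnn) hl2nn,
      hl2nn, hM0]
  linarith
end

section
/- Let E be a real inner product space and let p ∈ ℝ with p ≥ 1. There exists a finite constant C_p > 0 such that for all x, h ∈ E: | ‖x + h‖^{2p} − ‖x‖^{2p} − 2p ‖x‖^{2(p−1)} ⟨x, h⟩ | ≤ C_p ( ‖x‖^{2(p−1)} ‖h‖² + ‖h‖^{2p} ). -/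
open Real

/-- Convexity/gradient inequality for rpow: `s^p ≥ t^p + p t^{p-1}(s - t)`. -/
lemma grad_rpow {p : ℝ} (hp : 1 ≤ p) {s t : ℝ} (hs : 0 ≤ s) (ht : 0 < t) :
    t ^ p + p * t ^ (p - 1) * (s - t) ≤ s ^ p := by
  have hz : (-1 : ℝ) ≤ s / t - 1 := by
    have : 0 ≤ s / t := div_nonneg hs ht.le
    linarith
  have hb := one_add_mul_self_le_rpow_one_add hz hp
  have h1 : (1 : ℝ) + (s / t - 1) = s / t := by ring
  rw [h1] at hb
  have htp : (0 : ℝ) < t ^ p := rpow_pos_of_pos ht p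
  have hmul := mul_le_mul_of_nonneg_left hb htp.le
  have hst : t ^ p * (s / t) ^ p = s ^ p := by
    rw [← Real.mul_rpow ht.le (div_nonneg hs ht.le), mul_div_cancel₀ _ ht.ne']
  have htp1 : t ^ p = t ^ (p - 1) * t := by
    rw [← Real.rpow_add_one ht.ne']; ring_nf
  calc t ^ p + p * t ^ (p - 1) * (s - t)
      = t ^ p * (1 + p * (s / t - 1)) := by
        rw [htp1]; field_simp
    _ ≤ t ^ p * (s / t) ^ p := hmul
    _ = s ^ p := hst


lemma abs_rpow_sub_one_le {q : ℝ} (hq : 0 ≤ q) {c : ℝ} (hc1 : -1 ≤ c) (hc3 : c ≤ 3) :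
    |(1 + c) ^ q - 1| ≤ (1 + q * 4 ^ q) * |c| := by
  have h4q : (1:ℝ) ≤ 4 ^ q := one_le_rpow (by norm_num) hq
  have hM1 : (1 : ℝ) ≤ 1 + q * 4 ^ q := by nlinarith
  have hMc : |c| ≤ (1 + q * 4 ^ q) * |c| := le_mul_of_one_le_left (abs_nonneg c) hM1
  have hbase : (0 : ℝ) ≤ 1 + c := by linarith
  rcases le_or_gt q 1 with hq1 | hq1
  · refine le_trans (abs_le.mpr ⟨?_, ?_⟩) hMc
    · -- -(|c|) ≤ (1+c)^q - 1
      rcases le_or_gt 0 c with hc | hc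
      · have : (1+c) ^ (0:ℝ) ≤ (1+c) ^ q := rpow_le_rpow_of_exponent_le (by linarith) hq
        rw [rpow_zero] at this
        have : -(1+c)^q + 1 ≤ 0 := by linarith
        rw [abs_of_nonneg hc]; linarith
      · rw [abs_of_neg hc]
        rcases eq_or_lt_of_le hbase with h0 | h0
        · have h1 : (0:ℝ) ≤ (1+c) ^ q := rpow_nonneg hbase q
          linarith
        · have := rpow_le_rpow_of_exponent_ge h0 (by linarith) hq1
          rw [rpow_one] at this; linarith
    · -- (1+c)^q - 1 ≤ |c|
      rcases le_or_gt 0 c with hc | hc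
      · have := rpow_le_rpow_of_exponent_le (x := 1+c) (by linarith) hq1
        rw [rpow_one] at this
        rw [abs_of_nonneg hc]; linarith
      · have := rpow_le_one hbase (by linarith) hq
        have h2 : (0:ℝ) ≤ |c| := abs_nonneg c
        linarith
  · refine abs_le.mpr ⟨?_, ?_⟩
    · -- Bernoulli lower
      have hb := one_add_mul_self_le_rpow_one_add hc1 hq1.le
      have hqc : -(q * 4 ^ q * |c|) ≤ q * c := by
        rcases le_abs_self c, neg_abs_le c with ⟨h1, h2⟩
        nlinarith [abs_nonneg c, hq]
      nlinarith [abs_nonneg c]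
    · rcases le_or_gt c 0 with hc | hc
      · have := rpow_le_one hbase (by linarith) hq
        nlinarith [abs_nonneg c]
      · have hg := grad_rpow hq1.le (s := 1) (t := 1 + c) (by norm_num) (by linarith)
        have h41 : (1+c) ^ (q-1) ≤ 4 ^ (q-1) :=
          rpow_le_rpow hbase (by linarith) (by linarith)
        have h42 : (4:ℝ) ^ (q-1) ≤ 4 ^ q :=
          rpow_le_rpow_of_exponent_le (by norm_num) (by linarith)
        have hpos : (0:ℝ) ≤ (1+c) ^ (q-1) := rpow_nonneg hbase _
        rw [one_rpow] at hg
        have hA : (1+c) ^ (q-1) ≤ 4 ^ q := h41.trans h42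
        have key : q * (1+c) ^ (q-1) * c ≤ q * 4 ^ q * c :=
          mul_le_mul_of_nonneg_right (mul_le_mul_of_nonneg_left hA hq) hc.le
        rw [abs_of_pos hc]
        nlinarith

lemma phi_bound {p : ℝ} (hp : 1 ≤ p) {w : ℝ} (hw1 : -1 ≤ w) (hw3 : w ≤ 3) :
    |(1 + w) ^ p - 1 - p * w| ≤ (p * (1 + p * 4 ^ p)) * w ^ 2 := by
  have hp0 : (0:ℝ) < p := by linarith
  have h4p : (1:ℝ) ≤ 4 ^ p := one_le_rpow (by norm_num) hp0.le
  have hlow := one_add_mul_self_le_rpow_one_add hw1 hp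
  rw [abs_of_nonneg (by linarith)]
  rcases eq_or_lt_of_le (by linarith : (0:ℝ) ≤ 1 + w) with h0 | h0
  · -- w = -1
    have hw : w = -1 := by linarith
    subst hw
    rw [show (1:ℝ) + -1 = 0 by norm_num, zero_rpow hp0.ne']
    have hpos : (0:ℝ) ≤ p * p * 4 ^ p := by positivity
    norm_num
    nlinarith
  · have hg := grad_rpow hp (s := 1) (t := 1 + w) (by norm_num) h0
    rw [one_rpow] at hg
    set A := (1 + w) ^ (p - 1) with hA
    have hfin : (1 + w) ^ p - 1 - p * w ≤ p * (w * (A - 1)) := by nlinarith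
    have hM := abs_rpow_sub_one_le (q := p - 1) (by linarith) hw1 hw3
    have hMM : 1 + (p-1) * 4 ^ (p-1) ≤ 1 + p * 4 ^ p := by
      have h1 : (4:ℝ) ^ (p-1) ≤ 4 ^ p := rpow_le_rpow_of_exponent_le (by norm_num) (by linarith)
      have h2 : (0:ℝ) ≤ 4 ^ (p-1) := rpow_nonneg (by norm_num) _
      nlinarith
    have h4 : w * (A - 1) ≤ (1 + p * 4 ^ p) * w ^ 2 := by
      have h1 : w * (A - 1) ≤ |w| * |A - 1| := by rw [← abs_mul]; exact le_abs_self _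
      have h2 : |w| * |A - 1| ≤ |w| * ((1 + p * 4 ^ p) * |w|) := by
        refine mul_le_mul_of_nonneg_left (hM.trans ?_) (abs_nonneg w)
        exact mul_le_mul_of_nonneg_right hMM (abs_nonneg w)
      have h3 : |w| * |w| = w ^ 2 := by rw [abs_mul_abs_self]; ring
      calc w * (A - 1) ≤ |w| * ((1 + p * 4 ^ p) * |w|) := h1.trans h2
        _ = (1 + p * 4 ^ p) * w ^ 2 := by rw [← h3]; ring
    nlinarith [mul_le_mul_of_nonneg_left h4 hp0.le]

open RealInnerProductSpace

set_option maxHeartbeats 1000000 in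
/-- Taylor-formula estimate: for a real inner product space `E` and `p ≥ 1` there is a
finite constant `C_p > 0` with
`|‖x+h‖^{2p} − ‖x‖^{2p} − 2p‖x‖^{2(p−1)}⟨x,h⟩| ≤ C_p(‖x‖^{2(p−1)}‖h‖² + ‖h‖^{2p})`. -/
theorem taylor_pow_estimate {E : Type*} [NormedAddCommGroup E] [InnerProductSpace ℝ E]
    (p : ℝ) (hp : 1 ≤ p) :
    ∃ C : ℝ, 0 < C ∧ ∀ x h : E,
      |‖x + h‖ ^ (2 * p) - ‖x‖ ^ (2 * p) - 2 * p * ‖x‖ ^ (2 * (p - 1)) * ⟪x, h⟫| ≤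
        C * (‖x‖ ^ (2 * (p - 1)) * ‖h‖ ^ (2 : ℝ) + ‖h‖ ^ (2 * p)) := by
  have hp0 : (0 : ℝ) < p := by linarith
  have h4p : (0 : ℝ) < 4 ^ p := rpow_pos_of_pos (by norm_num) p
  set K : ℝ := p * (1 + p * 4 ^ p) with hK_def
  have hK : 0 ≤ K := by positivity
  refine ⟨4 ^ p + 2 * p + 1 + 9 * K + p, by positivity, ?_⟩
  set C : ℝ := 4 ^ p + 2 * p + 1 + 9 * K + p with hC_def
  have hC : 0 < C := by positivity
  have hrw : ∀ r : ℝ, 0 ≤ r → ∀ q : ℝ, r ^ (2 * q) = (r ^ 2) ^ q := by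
    intro r hr q
    rw [show (2 : ℝ) * q = (2 : ℝ) * q from rfl, Real.rpow_mul hr, Real.rpow_two]
  intro x h
  by_cases hh : h = 0
  · subst hh
    simp only [add_zero, inner_zero_right, mul_zero, sub_zero, sub_self, abs_zero, norm_zero]
    positivity
  set a : ℝ := ‖x‖ with ha_def
  set b : ℝ := ‖h‖ with hb_def
  set t : ℝ := ⟪x, h⟫ with ht_def
  have ha0 : 0 ≤ a := norm_nonneg x
  have hb0 : 0 < b := norm_pos_iff.mpr hh
  have ht : |t| ≤ a * b := abs_real_inner_le_norm x h
  have hb2 : b ^ (2 : ℝ) = b ^ 2 := Real.rpow_two b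
  have hb2p : (0 : ℝ) ≤ b ^ (2 * p) := rpow_nonneg hb0.le _
  rcases le_or_gt a b with hab | hab
  · -- case ‖x‖ ≤ ‖h‖
    have hXp : ‖x + h‖ ≤ 2 * b := (norm_add_le x h).trans (by linarith)
    have hX : ‖x + h‖ ^ (2 * p) ≤ 4 ^ p * b ^ (2 * p) := by
      calc ‖x + h‖ ^ (2 * p) ≤ (2 * b) ^ (2 * p) :=
            rpow_le_rpow (norm_nonneg _) hXp (by linarith)
        _ = 2 ^ (2 * p) * b ^ (2 * p) := mul_rpow (by norm_num) hb0.le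
        _ = 4 ^ p * b ^ (2 * p) := by
            rw [hrw 2 (by norm_num) p]; norm_num
    have hX0 : (0 : ℝ) ≤ ‖x + h‖ ^ (2 * p) := rpow_nonneg (norm_nonneg _) _
    have hY : a ^ (2 * p) ≤ b ^ (2 * p) := rpow_le_rpow ha0 hab (by linarith)
    have hY0 : (0 : ℝ) ≤ a ^ (2 * p) := rpow_nonneg ha0 _
    have hapm : a ^ (2 * (p - 1)) ≤ b ^ (2 * (p - 1)) := rpow_le_rpow ha0 hab (by linarith)
    have hapm0 : (0 : ℝ) ≤ a ^ (2 * (p - 1)) := rpow_nonneg ha0 _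
    have hbb : b ^ (2 * (p - 1)) * b ^ 2 = b ^ (2 * p) := by
      rw [← Real.rpow_two b, ← Real.rpow_add hb0, show 2 * (p - 1) + (2:ℝ) = 2 * p by ring]
    have hZ : |2 * p * a ^ (2 * (p - 1)) * t| ≤ 2 * p * b ^ (2 * p) := by
      have h1 : |2 * p * a ^ (2 * (p - 1)) * t| = 2 * p * a ^ (2 * (p - 1)) * |t| := by
        rw [abs_mul, abs_of_nonneg (by positivity : (0:ℝ) ≤ 2 * p * a ^ (2 * (p - 1)))]
      rw [h1, ← hbb]
      have h2 : a ^ (2 * (p - 1)) * |t| ≤ b ^ (2 * (p - 1)) * (b * b) :=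
        mul_le_mul hapm (ht.trans (by nlinarith)) (abs_nonneg t)
          (rpow_nonneg hb0.le _)
      nlinarith
    have hfirst : (0 : ℝ) ≤ a ^ (2 * (p - 1)) * b ^ (2 : ℝ) := by positivity
    have hZ' := abs_le.mp hZ
    rw [abs_le]
    constructor
    · nlinarith [mul_nonneg hC.le hfirst]
    · nlinarith [mul_nonneg hC.le hfirst]
  · -- case ‖h‖ < ‖x‖
    have ha : 0 < a := lt_of_le_of_lt hb0.le hab
    obtain ⟨u, hu_def⟩ : ∃ u : ℝ, u = a ^ 2 := ⟨_, rfl⟩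
    have hu : 0 < u := by rw [hu_def]; positivity
    obtain ⟨w, hw_def⟩ : ∃ w : ℝ, w = (2 * t + b ^ 2) / u := ⟨_, rfl⟩
    have huw : u * w = 2 * t + b ^ 2 := by
      rw [hw_def, mul_comm, div_mul_cancel₀ _ hu.ne']
    have hsq : ‖x + h‖ ^ 2 = u * (1 + w) := by
      rw [norm_add_sq_real]
      linear_combination -hu_def - huw
    have h1w : 0 ≤ 1 + w := by
      have h0 := sq_nonneg ‖x + h‖
      rw [hsq] at h0
      have h0' : u * 0 ≤ u * (1 + w) := by simpa using h0
      exact le_of_mul_le_mul_left h0' hu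
    have hw1 : -1 ≤ w := by linarith
    have hv : |2 * t + b ^ 2| ≤ 3 * a * b := by
      rcases abs_le.mp ht with ⟨h1, h2⟩
      rw [abs_le]; constructor <;> nlinarith
    have hw3 : w ≤ 3 := by
      rw [hw_def, div_le_iff₀ hu]
      nlinarith [le_abs_self (2 * t + b ^ 2)]
    have huw2 : u * w ^ 2 ≤ 9 * b ^ 2 := by
      have hv2 : (2 * t + b ^ 2) ^ 2 ≤ 9 * u * b ^ 2 := by
        nlinarith [mul_self_le_mul_self (abs_nonneg (2 * t + b ^ 2)) hv,
          sq_abs (2 * t + b ^ 2)]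
      have he : u * w ^ 2 = (2 * t + b ^ 2) ^ 2 / u := by
        rw [hw_def]; field_simp
      rw [he, div_le_iff₀ hu]; nlinarith
    have hu_split : u ^ p = u ^ (p - 1) * u := by
      rw [← Real.rpow_add_one hu.ne' (p - 1)]; ring_nf
    have hupm : (0 : ℝ) ≤ u ^ (p - 1) := rpow_nonneg hu.le _
    have eX : ‖x + h‖ ^ (2 * p) = u ^ (p - 1) * (u * (1 + w) ^ p) := by
      calc ‖x + h‖ ^ (2 * p) = (‖x + h‖ ^ 2) ^ p := hrw _ (norm_nonneg _) p
        _ = (u * (1 + w)) ^ p := by rw [hsq]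
        _ = u ^ p * (1 + w) ^ p := mul_rpow hu.le h1w
        _ = u ^ (p - 1) * (u * (1 + w) ^ p) := by rw [hu_split]; ring
    have eY : a ^ (2 * p) = u ^ (p - 1) * u := by
      rw [hrw a ha0 p, ← hu_def, hu_split]
    have eZ : a ^ (2 * (p - 1)) = u ^ (p - 1) := by
      rw [hrw a ha0 (p - 1), ← hu_def]
    have key : ‖x + h‖ ^ (2 * p) - a ^ (2 * p) - 2 * p * a ^ (2 * (p - 1)) * t =
        u ^ (p - 1) * (u * ((1 + w) ^ p - 1 - p * w) + p * b ^ 2) := by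
      rw [eX, eY, eZ]
      linear_combination p * u ^ (p - 1) * huw
    have hφ := phi_bound hp hw1 hw3
    have habs : |u * ((1 + w) ^ p - 1 - p * w) + p * b ^ 2| ≤ 9 * K * b ^ 2 + p * b ^ 2 := by
      have h1 : |u * ((1 + w) ^ p - 1 - p * w) + p * b ^ 2| ≤
          u * |(1 + w) ^ p - 1 - p * w| + p * b ^ 2 := by
        calc _ ≤ |u * ((1 + w) ^ p - 1 - p * w)| + |p * b ^ 2| := abs_add_le _ _
          _ = u * |(1 + w) ^ p - 1 - p * w| + p * b ^ 2 := by
              rw [abs_mul, abs_of_nonneg hu.le,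
                abs_of_nonneg (by positivity : (0:ℝ) ≤ p * b ^ 2)]
      have h2 : u * |(1 + w) ^ p - 1 - p * w| ≤ u * (K * w ^ 2) :=
        mul_le_mul_of_nonneg_left hφ hu.le
      have h4 : K * (u * w ^ 2) ≤ K * (9 * b ^ 2) := mul_le_mul_of_nonneg_left huw2 hK
      nlinarith
    rw [key, eZ, hb2, abs_mul, abs_of_nonneg hupm]
    have hmain : u ^ (p - 1) * |u * ((1 + w) ^ p - 1 - p * w) + p * b ^ 2| ≤
        u ^ (p - 1) * (9 * K * b ^ 2 + p * b ^ 2) := mul_le_mul_of_nonneg_left habs hupm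
    have hub2 : (0 : ℝ) ≤ u ^ (p - 1) * b ^ 2 := by positivity
    nlinarith [mul_nonneg (by positivity : (0:ℝ) ≤ 4 ^ p + 2 * p + 1) hub2,
      mul_nonneg hC.le hb2p]
end

section
/- Let h : [0,T] × Z → ℝ be measurable with ∫_{[0,T]×Z} |h|² dϑ_T < ∞, and such that for every δ > 0 and every measurable E ⊆ [0,T] × Z with ϑ_T(E) < ∞ one has ∫_E exp(δ |h(s,z)|) dϑ_T < ∞. Fix M > 0. Then for every ε > 0 there exists a compact set K_ε ⊆ Z such that sup_{g ∈ S^M} ∫_0^T ∫_{Z \ K_ε} |h(s,z)| |g(s,z) − 1| ϑ(dz) ds ≤ ε. -/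
open MeasureTheory

noncomputable section

variable {Z : Type*} [TopologicalSpace Z] [PolishSpace Z] [LocallyCompactSpace Z]
  [MeasurableSpace Z] [BorelSpace Z]

/-- `l(r) = r log r − r + 1` (with `l(0) = 1`, since `Real.log 0 = 0`). -/
def ell (r : ℝ) : ℝ := r * Real.log r - r + 1

/-- The measure `ϑ_T = λ_T ⊗ ϑ` on `[0,T] × Z` (realized on `ℝ × Z` with Lebesgue measure
restricted to `[0,T]` in the first coordinate). -/
def thetaT (T : ℝ) (ϑ : Measure Z) : Measure (ℝ × Z) :=
  (volume.restrict (Set.Icc 0 T)).prod ϑ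

/-- `S^M`: the set of nonnegative measurable functions `g` on `[0,T] × Z` with
`∫ l(g) dϑ_T ≤ M`. -/
def SM (T : ℝ) (ϑ : Measure Z) (M : ℝ) : Set (ℝ × Z → ℝ) :=
  {g | Measurable g ∧ (∀ p, 0 ≤ g p) ∧
    ∫⁻ p, ENNReal.ofReal (ell (g p)) ∂(thetaT T ϑ) ≤ ENNReal.ofReal M}

end

section Aux
open ENNReal

lemma ell_ge_sq {r : ℝ} (hr : 0 ≤ r) : (Real.sqrt r - 1) ^ 2 ≤ ell r := by
  rcases eq_or_lt_of_le hr with h | h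
  · simp [← h, ell]
  · set t := Real.sqrt r with ht
    have htpos : 0 < t := Real.sqrt_pos.2 h
    have ht2 : t ^ 2 = r := Real.sq_sqrt hr
    have h1 : 1 - t⁻¹ ≤ Real.log t := Real.one_sub_inv_le_log_of_pos htpos
    have h2 : t - 1 ≤ t * Real.log t := by
      have h3 := mul_le_mul_of_nonneg_left h1 htpos.le
      have h4 : t * t⁻¹ = 1 := mul_inv_cancel₀ htpos.ne'
      nlinarith
    rw [ell, ← ht2, Real.log_pow]
    push_cast
    nlinarith [mul_nonneg htpos.le (by linarith : (0:ℝ) ≤ t * Real.log t - t + 1)]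

lemma ell_nonneg {r : ℝ} (hr : 0 ≤ r) : 0 ≤ ell r :=
  le_trans (sq_nonneg _) (ell_ge_sq hr)

lemma young (a b : ℝ) (hb : 0 ≤ b) : a * b ≤ Real.exp a + ell b := by
  rcases eq_or_lt_of_le hb with h | h
  · rw [← h]; simp [ell]; positivity
  · have h1 : (a - Real.log b) + 1 ≤ Real.exp (a - Real.log b) := Real.add_one_le_exp _
    have h2 : Real.exp (a - Real.log b) = Real.exp a / b := by
      rw [Real.exp_sub, Real.exp_log h]
    rw [h2] at h1
    have h3 := mul_le_mul_of_nonneg_left h1 h.le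
    have h4 : b * (Real.exp a / b) = Real.exp a := by field_simp
    rw [h4] at h3
    unfold ell
    nlinarith

lemma le_twenty_ell {b : ℝ} (hb : 2 ≤ b) : b ≤ 20 * ell b := by
  have hb0 : (0:ℝ) ≤ b := by linarith
  have h1 : (Real.sqrt b - 1) ^ 2 ≤ ell b := ell_ge_sq hb0
  have ht2 : Real.sqrt b ^ 2 = b := Real.sq_sqrt hb0
  have ht : (1.41:ℝ) ≤ Real.sqrt b := by
    rw [show (1.41:ℝ) = Real.sqrt (1.41^2) by rw [Real.sqrt_sq]; norm_num]
    exact Real.sqrt_le_sqrt (by norm_num; linarith)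
  nlinarith [sq_nonneg (Real.sqrt b - 1.41)]

lemma sq_le_seven_ell {b : ℝ} (hb0 : 0 ≤ b) (hb : b ≤ 2) : (b - 1) ^ 2 ≤ 7 * ell b := by
  have h1 : (Real.sqrt b - 1) ^ 2 ≤ ell b := ell_ge_sq hb0
  have ht2 : Real.sqrt b ^ 2 = b := Real.sq_sqrt hb0
  have ht0 : 0 ≤ Real.sqrt b := Real.sqrt_nonneg b
  have ht : Real.sqrt b ≤ 1.5 := by nlinarith
  have h5 : (Real.sqrt b + 1) ^ 2 ≤ 7 := by nlinarith
  have h6 : (b - 1) ^ 2 = (Real.sqrt b - 1) ^ 2 * (Real.sqrt b + 1) ^ 2 := by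
    linear_combination (2 - b - Real.sqrt b ^ 2) * ht2
  rw [h6]
  calc (Real.sqrt b - 1) ^ 2 * (Real.sqrt b + 1) ^ 2
      ≤ ell b * 7 := mul_le_mul h1 h5 (sq_nonneg _) (ell_nonneg hb0)
    _ = 7 * ell b := by ring

lemma master_ineq (lam β σ a b : ℝ) (hlam : 0 < lam) (hβ : 0 < β) (hσ : 0 < σ)
    (ha : 0 ≤ a) (hb : 0 ≤ b) :
    a * |b - 1| ≤ 1/(2*lam) * a^2 + (4*lam + 20*β + 1/σ) * ell b
      + (if β < a then (1/σ) * Real.exp (σ * a) else 0) := by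
  have hell : 0 ≤ ell b := ell_nonneg hb
  have hind : (0:ℝ) ≤ if β < a then (1/σ) * Real.exp (σ * a) else 0 := by
    split_ifs <;> positivity
  have ha2 : (0:ℝ) ≤ 1/(2*lam) * a^2 := by positivity
  have hmul1 : 0 ≤ lam * ell b := mul_nonneg hlam.le hell
  have hmul2 : 0 ≤ β * ell b := mul_nonneg hβ.le hell
  have hmul3 : 0 ≤ 1/σ * ell b := mul_nonneg (by positivity) hell
  by_cases hb1 : |b - 1| ≤ 1
  · have key : 2*lam*(a*|b-1|) ≤ a^2 + lam^2*(b-1)^2 := by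
      nlinarith [sq_nonneg (a - lam*|b-1|), sq_abs (b-1)]
    have h1 : a * |b-1| ≤ 1/(2*lam) * a^2 + lam/2 * (b-1)^2 := by
      have h2 : a*|b-1| = 1/(2*lam) * (2*lam*(a*|b-1|)) := by field_simp
      rw [h2]
      calc 1/(2*lam) * (2*lam*(a*|b-1|)) ≤ 1/(2*lam) * (a^2 + lam^2*(b-1)^2) :=
            mul_le_mul_of_nonneg_left key (by positivity)
        _ = 1/(2*lam)*a^2 + lam/2*(b-1)^2 := by field_simp; try ring
    have hble : b ≤ 2 := by cases abs_le.1 hb1 with | intro l r => linarith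
    have h2 := sq_le_seven_ell hb hble
    have h2' : lam/2 * (b-1)^2 ≤ lam/2 * (7 * ell b) :=
      mul_le_mul_of_nonneg_left h2 (by positivity)
    have h3 : lam/2 * (7 * ell b) ≤ (4*lam + 20*β + 1/σ) * ell b := by nlinarith
    linarith
  · push_neg at hb1
    have hb2 : 2 < b := by
      rcases lt_abs.1 hb1 with h' | h'
      · linarith
      · linarith
    have habs : |b - 1| = b - 1 := abs_of_pos (by linarith)
    have hab' : a * (b - 1) ≤ a * b := by nlinarith
    by_cases hab : β < a
    · rw [if_pos hab]
      have hy : (σ*a) * b ≤ Real.exp (σ*a) + ell b := young _ _ hb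
      have h6 : a * b ≤ 1/σ * Real.exp (σ*a) + 1/σ * ell b := by
        have h2 : a*b = 1/σ * ((σ*a)*b) := by field_simp; try ring
        rw [h2]
        calc 1/σ * ((σ*a)*b) ≤ 1/σ * (Real.exp (σ*a) + ell b) :=
              mul_le_mul_of_nonneg_left hy (by positivity)
          _ = 1/σ * Real.exp (σ*a) + 1/σ * ell b := by ring
      have h3 : 1/σ * ell b ≤ (4*lam + 20*β + 1/σ) * ell b := by nlinarith
      rw [habs]
      linarith
    · rw [if_neg hab]
      push_neg at hab
      have h7 : b ≤ 20 * ell b := le_twenty_ell hb2.le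
      have h8 : a * b ≤ β * b := mul_le_mul_of_nonneg_right hab (by linarith)
      have h9 : β * b ≤ β * (20 * ell b) := mul_le_mul_of_nonneg_left h7 hβ.le
      have h3 : β * (20 * ell b) ≤ (4*lam + 20*β + 1/σ) * ell b := by nlinarith
      rw [habs]
      linarith

open Filter Topology in
lemma tail_small {Z : Type*} [TopologicalSpace Z] [PolishSpace Z] [LocallyCompactSpace Z]
    [MeasurableSpace Z] [BorelSpace Z]
    (μ : Measure (ℝ × Z)) (F : ℝ × Z → ℝ≥0∞) (hfin : ∫⁻ p, F p ∂μ < ⊤)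
    {η : ℝ≥0∞} (hη : 0 < η) :
    ∃ K : Set Z, IsCompact K ∧ ∫⁻ p in (Set.univ : Set ℝ) ×ˢ Kᶜ, F p ∂μ ≤ η := by
  set ν := μ.withDensity F with hν
  set s : ℕ → Set (ℝ × Z) := fun n => (Set.univ : Set ℝ) ×ˢ (compactCovering Z n)ᶜ with hs
  have hmeasn : ∀ n, MeasurableSet (s n) := fun n =>
    MeasurableSet.univ.prod (isCompact_compactCovering Z n).isClosed.measurableSet.compl
  have hanti : Antitone s := fun m n hmn =>
    Set.prod_mono subset_rfl (Set.compl_subset_compl.2 (compactCovering_subset Z hmn))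
  have hiInter : ⋂ n, s n = ∅ := by
    ext p
    simp only [hs, Set.mem_iInter, Set.mem_prod, Set.mem_univ, true_and, Set.mem_compl_iff,
      Set.mem_empty_iff_false, iff_false, not_forall, not_not]
    exact exists_mem_compactCovering p.2
  have hνuniv : ν Set.univ ≠ ⊤ := by
    rw [hν, withDensity_apply _ MeasurableSet.univ, Measure.restrict_univ]
    exact hfin.ne
  have h0 : Tendsto (ν ∘ s) atTop (𝓝 (ν (⋂ n, s n))) :=
    tendsto_measure_iInter_atTop (fun n => (hmeasn n).nullMeasurableSet) hanti
      ⟨0, ne_top_of_le_ne_top hνuniv (measure_mono (Set.subset_univ _))⟩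
  rw [hiInter, measure_empty] at h0
  obtain ⟨n, hn⟩ := (h0.eventually_lt_const hη).exists
  refine ⟨compactCovering Z n, isCompact_compactCovering Z n, ?_⟩
  have heq : ν (s n) = ∫⁻ p in s n, F p ∂μ := withDensity_apply _ (hmeasn n)
  rw [← heq]
  exact hn.le

end Aux

/-- Uniform tightness in the `Z` variable over `S^M` (Lemma 4.4 (2) of the paper):
for every `ε > 0` there is a compact `K_ε ⊆ Z` such that
`sup_{g ∈ S^M} ∫_0^T ∫_{Z \ K_ε} |h| |g − 1| dϑ ds ≤ ε`. -/
theorem sup_SM_integral_outside_compact_small {Z : Type*} [TopologicalSpace Z] [PolishSpace Z]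
    [LocallyCompactSpace Z] [MeasurableSpace Z] [BorelSpace Z]
    (T : ℝ) (hT : 0 < T) (ϑ : Measure Z) [SigmaFinite ϑ] [IsFiniteMeasureOnCompacts ϑ]
    (h : ℝ × Z → ℝ) (hmeas : Measurable h)
    (hL2 : ∫⁻ p, ENNReal.ofReal (|h p| ^ 2) ∂(thetaT T ϑ) < ⊤)
    (hexp : ∀ δ : ℝ, 0 < δ → ∀ E : Set (ℝ × Z), MeasurableSet E → thetaT T ϑ E < ⊤ →
      ∫⁻ p in E, ENNReal.ofReal (Real.exp (δ * |h p|)) ∂(thetaT T ϑ) < ⊤)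
    (M : ℝ) (hM : 0 < M) (ε : ℝ) (hε : 0 < ε) :
    ∃ K : Set Z, IsCompact K ∧
      (⨆ g ∈ SM T ϑ M,
        ∫⁻ p in (Set.univ : Set ℝ) ×ˢ Kᶜ, ENNReal.ofReal (|h p| * |g p - 1|) ∂(thetaT T ϑ)) ≤
        ENNReal.ofReal ε := by
  classical
  set μ := thetaT T ϑ with hμ
  set lam := ε / (16*M) with hlam_def
  set β := ε / (160*M) with hβ_def
  set σ := 8*M/ε with hσ_def
  have hlam : 0 < lam := by positivity
  have hβp : 0 < β := by positivity
  have hσp : 0 < σ := by positivity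
  set E : Set (ℝ × Z) := {p | β < |h p|} with hE_def
  have hEmeas : MeasurableSet E := measurableSet_lt measurable_const hmeas.abs
  have hF1meas : Measurable (fun p => ENNReal.ofReal (|h p| ^ 2)) :=
    (hmeas.abs.pow measurable_const).ennreal_ofReal
  have hEfin : μ E < ⊤ := by
    have hsub : E ⊆ {p | ENNReal.ofReal (β^2) ≤ ENNReal.ofReal (|h p|^2)} := by
      intro p hp
      simp only [hE_def, Set.mem_setOf_eq] at hp ⊢
      exact ENNReal.ofReal_le_ofReal (by nlinarith [abs_nonneg (h p)])
    have hmarkov := meas_ge_le_lintegral_div (μ := μ)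
      (f := fun p => ENNReal.ofReal (|h p|^2)) hF1meas.aemeasurable
      (ε := ENNReal.ofReal (β^2)) (ne_of_gt (ENNReal.ofReal_pos.2 (by positivity)))
      ENNReal.ofReal_ne_top
    calc μ E ≤ μ {p | ENNReal.ofReal (β^2) ≤ ENNReal.ofReal (|h p|^2)} := measure_mono hsub
      _ ≤ (∫⁻ p, ENNReal.ofReal (|h p|^2) ∂μ) / ENNReal.ofReal (β^2) := hmarkov
      _ < ⊤ := ENNReal.div_lt_top hL2.ne (ne_of_gt (ENNReal.ofReal_pos.2 (by positivity)))
  have hexpfin : ∫⁻ p in E, ENNReal.ofReal (Real.exp (σ * |h p|)) ∂μ < ⊤ :=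
    hexp σ hσp E hEmeas hEfin
  have hF2meas : Measurable (E.indicator (fun p => ENNReal.ofReal (Real.exp (σ * |h p|)))) :=
    Measurable.indicator ((hmeas.abs.const_mul σ).exp.ennreal_ofReal) hEmeas
  have hF2fin : ∫⁻ p, E.indicator (fun p => ENNReal.ofReal (Real.exp (σ * |h p|))) p ∂μ < ⊤ := by
    rw [lintegral_indicator hEmeas]
    exact hexpfin
  obtain ⟨K₁, hK₁c, hK₁⟩ := tail_small μ (fun p => ENNReal.ofReal (|h p| ^ 2)) hL2
    (η := ENNReal.ofReal (lam * ε / 2)) (ENNReal.ofReal_pos.2 (by positivity))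
  obtain ⟨K₂, hK₂c, hK₂⟩ := tail_small μ
    (E.indicator (fun p => ENNReal.ofReal (Real.exp (σ * |h p|)))) hF2fin
    (η := ENNReal.ofReal (σ * ε / 4)) (ENNReal.ofReal_pos.2 (by positivity))
  refine ⟨K₁ ∪ K₂, hK₁c.union hK₂c, ?_⟩
  refine iSup₂_le fun g hg => ?_
  obtain ⟨hgmeas, hgpos, hgint⟩ := hg
  set A := (Set.univ : Set ℝ) ×ˢ (K₁ ∪ K₂)ᶜ with hA
  have hellmeas : Measurable (fun p => ENNReal.ofReal (ell (g p))) := by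
    apply Measurable.ennreal_ofReal
    unfold ell
    exact ((hgmeas.mul (Real.measurable_log.comp hgmeas)).sub hgmeas).add measurable_const
  have hpt : ∀ p, ENNReal.ofReal (|h p| * |g p - 1|) ≤
      ENNReal.ofReal (1/(2*lam)) * ENNReal.ofReal (|h p| ^ 2)
      + ENNReal.ofReal (4*lam + 20*β + 1/σ) * ENNReal.ofReal (ell (g p))
      + ENNReal.ofReal (1/σ) *
          E.indicator (fun p => ENNReal.ofReal (Real.exp (σ * |h p|))) p := by
    intro p
    have hm := master_ineq lam β σ (|h p|) (g p) hlam hβp hσp (abs_nonneg _) (hgpos p)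
    have hc1 : (0:ℝ) ≤ 1/(2*lam) := by positivity
    have hc2 : (0:ℝ) ≤ 4*lam + 20*β + 1/σ := by positivity
    have hc3 : (0:ℝ) ≤ 1/σ := by positivity
    by_cases hmem : p ∈ E
    · rw [Set.indicator_of_mem hmem]
      rw [if_pos (by simpa [hE_def] using hmem)] at hm
      calc ENNReal.ofReal (|h p| * |g p - 1|)
          ≤ ENNReal.ofReal (1/(2*lam) * |h p|^2 + (4*lam + 20*β + 1/σ) * ell (g p)
              + 1/σ * Real.exp (σ * |h p|)) := ENNReal.ofReal_le_ofReal hm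
        _ ≤ ENNReal.ofReal (1/(2*lam) * |h p|^2 + (4*lam + 20*β + 1/σ) * ell (g p))
              + ENNReal.ofReal (1/σ * Real.exp (σ * |h p|)) := ENNReal.ofReal_add_le
        _ ≤ ENNReal.ofReal (1/(2*lam) * |h p|^2)
              + ENNReal.ofReal ((4*lam + 20*β + 1/σ) * ell (g p))
              + ENNReal.ofReal (1/σ * Real.exp (σ * |h p|)) :=
            add_le_add_left ENNReal.ofReal_add_le _
        _ = _ := by
            rw [ENNReal.ofReal_mul hc1, ENNReal.ofReal_mul hc2, ENNReal.ofReal_mul hc3]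
    · rw [Set.indicator_of_notMem hmem, mul_zero, add_zero]
      rw [if_neg (by simpa [hE_def] using hmem), add_zero] at hm
      calc ENNReal.ofReal (|h p| * |g p - 1|)
          ≤ ENNReal.ofReal (1/(2*lam) * |h p|^2 + (4*lam + 20*β + 1/σ) * ell (g p)) :=
            ENNReal.ofReal_le_ofReal hm
        _ ≤ ENNReal.ofReal (1/(2*lam) * |h p|^2)
              + ENNReal.ofReal ((4*lam + 20*β + 1/σ) * ell (g p)) := ENNReal.ofReal_add_le
        _ = _ := by rw [ENNReal.ofReal_mul hc1, ENNReal.ofReal_mul hc2]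
  have hMne : (M:ℝ) ≠ 0 := hM.ne'
  have hεne : (ε:ℝ) ≠ 0 := hε.ne'
  calc ∫⁻ p in A, ENNReal.ofReal (|h p| * |g p - 1|) ∂μ
      ≤ ∫⁻ p in A, (ENNReal.ofReal (1/(2*lam)) * ENNReal.ofReal (|h p| ^ 2)
          + ENNReal.ofReal (4*lam + 20*β + 1/σ) * ENNReal.ofReal (ell (g p))
          + ENNReal.ofReal (1/σ) *
              E.indicator (fun p => ENNReal.ofReal (Real.exp (σ * |h p|))) p) ∂μ :=
        lintegral_mono hpt
    _ = (∫⁻ p in A, ENNReal.ofReal (1/(2*lam)) * ENNReal.ofReal (|h p| ^ 2) ∂μ)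
        + (∫⁻ p in A, ENNReal.ofReal (4*lam + 20*β + 1/σ) * ENNReal.ofReal (ell (g p)) ∂μ)
        + (∫⁻ p in A, ENNReal.ofReal (1/σ) *
            E.indicator (fun p => ENNReal.ofReal (Real.exp (σ * |h p|))) p ∂μ) := by
        rw [lintegral_add_left (f := fun p => ENNReal.ofReal (1/(2*lam)) * ENNReal.ofReal (|h p| ^ 2)
            + ENNReal.ofReal (4*lam + 20*β + 1/σ) * ENNReal.ofReal (ell (g p)))
            ((hF1meas.const_mul _).add (hellmeas.const_mul _)),
          lintegral_add_left (hF1meas.const_mul _)]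
    _ = ENNReal.ofReal (1/(2*lam)) * (∫⁻ p in A, ENNReal.ofReal (|h p| ^ 2) ∂μ)
        + ENNReal.ofReal (4*lam + 20*β + 1/σ) * (∫⁻ p in A, ENNReal.ofReal (ell (g p)) ∂μ)
        + ENNReal.ofReal (1/σ) * (∫⁻ p in A,
            E.indicator (fun p => ENNReal.ofReal (Real.exp (σ * |h p|))) p ∂μ) := by
        rw [lintegral_const_mul _ hF1meas, lintegral_const_mul _ hellmeas,
          lintegral_const_mul _ hF2meas]
    _ ≤ ENNReal.ofReal (1/(2*lam)) * ENNReal.ofReal (lam * ε / 2)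
        + ENNReal.ofReal (4*lam + 20*β + 1/σ) * ENNReal.ofReal M
        + ENNReal.ofReal (1/σ) * ENNReal.ofReal (σ * ε / 4) := by
        gcongr
        · exact le_trans (lintegral_mono_set (Set.prod_mono subset_rfl
            (Set.compl_subset_compl.2 Set.subset_union_left))) hK₁
        · exact le_trans (setLIntegral_le_lintegral _ _) hgint
        · exact le_trans (lintegral_mono_set (Set.prod_mono subset_rfl
            (Set.compl_subset_compl.2 Set.subset_union_right))) hK₂
    _ = ENNReal.ofReal (ε/4) + ENNReal.ofReal (ε/2) + ENNReal.ofReal (ε/4) := by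
        rw [← ENNReal.ofReal_mul (by positivity), ← ENNReal.ofReal_mul (by positivity),
          ← ENNReal.ofReal_mul (by positivity)]
        have hlamne := hlam.ne'
        have hσne := hσp.ne'
        have e1 : 1/(2*lam) * (lam * ε / 2) = ε/4 := by field_simp; try ring
        have e2 : (4*lam + 20*β + 1/σ) * M = ε/2 := by
          rw [hlam_def, hβ_def, hσ_def]
          field_simp
          try ring
        have e3 : 1/σ * (σ * ε / 4) = ε/4 := by field_simp; try ring
        rw [e1, e2, e3]
    _ = ENNReal.ofReal ε := by
        rw [← ENNReal.ofReal_add (by positivity) (by positivity),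
          ← ENNReal.ofReal_add (by positivity) (by positivity)]
        congr 1
        ring
end

section
/- Let T > 0, p ∈ (1,∞) and α ∈ (0,1). Let B₀, B, B₁ be real Banach spaces, with B₀ and B₁ reflexive (the canonical embedding of each into its double dual is surjective). Let j₀ : B₀ → B and j₁ : B → B₁ be injective continuous linear maps, and assume j₀ is a compact operator (it maps bounded sets to relatively compact sets). Then for every sequence (u_n) of strongly measurable functions u_n : [0,T] → B₀ satisfying sup_n [ ∫_0^T ‖u_n(t)‖_{B₀}^p dt + ∫_0^T ∫_0^T ‖j₁(j₀(u_n(t))) − j₁(j₀(u_n(s)))‖_{B₁}^p / |t − s|^{1+αp} dt ds ] < ∞, there exist a subsequence (u_{n_k}) and a strongly measurable v : [0,T] → B with ∫_0^T ‖v(t)‖_B^p dt < ∞ such that ∫_0^T ‖j₀(u_{n_k}(t)) − v(t)‖_B^p dt → 0 as k → ∞. That is, the embedding of L^p([0,T];B₀) ∩ W^{α,p}([0,T];B₁) into L^p([0,T];B) is compact. -/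
open MeasureTheory Filter Set ENNReal


namespace FGaux

/-- Ehrling-type lemma. -/
lemma ehrling {B₀ B B₁ : Type*}
    [NormedAddCommGroup B₀] [NormedSpace ℝ B₀]
    [NormedAddCommGroup B] [NormedSpace ℝ B]
    [NormedAddCommGroup B₁] [NormedSpace ℝ B₁]
    (j₀ : B₀ →L[ℝ] B)
    (hj₀cpt : ∀ s : Set B₀, Bornology.IsBounded s → IsCompact (closure (⇑j₀ '' s)))
    (j₁ : B →L[ℝ] B₁) (hj₁inj : Function.Injective j₁)
    {ε : ℝ} (hε : 0 < ε) :
    ∃ c : ℝ, 0 ≤ c ∧ ∀ x : B₀, ‖j₀ x‖ ≤ ε * ‖x‖ + c * ‖j₁ (j₀ x)‖ := by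
  by_contra hcon
  push_neg at hcon
  have key : ∀ k : ℕ, ∃ y : B₀, ‖y‖ = 1 ∧ ε + (k : ℝ) * ‖j₁ (j₀ y)‖ < ‖j₀ y‖ := by
    intro k
    obtain ⟨x, hx⟩ := hcon k (Nat.cast_nonneg k)
    have hx0 : x ≠ 0 := by
      rintro rfl
      simp at hx
    have hnx : (0:ℝ) < ‖x‖ := norm_pos_iff.2 hx0
    refine ⟨‖x‖⁻¹ • x, ?_, ?_⟩
    · simp [norm_smul, abs_of_pos (inv_pos.2 hnx), inv_mul_cancel₀ hnx.ne']
    · have h1 : ‖j₀ (‖x‖⁻¹ • x)‖ = ‖x‖⁻¹ * ‖j₀ x‖ := by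
        rw [_root_.map_smul]; simp [norm_smul, abs_of_pos (inv_pos.2 hnx)]
      have h2 : ‖j₁ (j₀ (‖x‖⁻¹ • x))‖ = ‖x‖⁻¹ * ‖j₁ (j₀ x)‖ := by
        rw [_root_.map_smul, _root_.map_smul]; simp [norm_smul, abs_of_pos (inv_pos.2 hnx)]
      rw [h1, h2]
      rw [show ε + (k:ℝ) * (‖x‖⁻¹ * ‖j₁ (j₀ x)‖)
          = ‖x‖⁻¹ * (ε * ‖x‖ + (k:ℝ) * ‖j₁ (j₀ x)‖) by field_simp]
      exact mul_lt_mul_of_pos_left hx (inv_pos.2 hnx)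
  choose y hy1 hy2 using key
  have hmem : ∀ k, j₀ (y k) ∈ closure (⇑j₀ '' Metric.closedBall 0 1) := by
    intro k
    exact subset_closure ⟨y k, by simp [hy1 k], rfl⟩
  obtain ⟨z, hz, φ, hφ, hconv⟩ :=
    (hj₀cpt _ Metric.isBounded_closedBall).tendsto_subseq hmem
  have hj₁lim : Tendsto (fun k => j₁ (j₀ (y (φ k)))) atTop (nhds (j₁ z)) :=
    (j₁.continuous.tendsto z).comp hconv
  have hnorm0 : Tendsto (fun k => ‖j₁ (j₀ (y (φ k)))‖) atTop (nhds 0) := by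
    have hb : ∀ k : ℕ, 1 ≤ k → ‖j₁ (j₀ (y (φ k)))‖ ≤ ‖j₀‖ / (φ k : ℝ) := by
      intro k hk
      have hφk : (1:ℝ) ≤ (φ k : ℝ) := by
        have := hφ.le_apply (x := k)
        exact_mod_cast le_trans hk this
      have h2 := hy2 (φ k)
      have h3 : ‖j₀ (y (φ k))‖ ≤ ‖j₀‖ := by
        calc ‖j₀ (y (φ k))‖ ≤ ‖j₀‖ * ‖y (φ k)‖ := j₀.le_opNorm _
        _ = ‖j₀‖ := by rw [hy1]; ring
      have hφpos : (0:ℝ) < (φ k : ℝ) := lt_of_lt_of_le one_pos hφk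
      rw [le_div_iff₀ hφpos]
      nlinarith [norm_nonneg (j₁ (j₀ (y (φ k))))]
    have htend : Tendsto (fun k : ℕ => ‖j₀‖ / (φ k : ℝ)) atTop (nhds 0) := by
      apply Tendsto.div_atTop tendsto_const_nhds
      exact tendsto_natCast_atTop_atTop.comp hφ.tendsto_atTop
    refine squeeze_zero' ?_ (eventually_atTop.2 ⟨1, hb⟩) htend
    exact Eventually.of_forall fun k => norm_nonneg _
  have hz0 : j₁ z = 0 := by
    have := tendsto_nhds_unique hj₁lim (by
      simpa using (tendsto_zero_iff_norm_tendsto_zero).2 hnorm0)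
    exact this
  have hzz : z = 0 := hj₁inj (by simpa using hz0)
  have hznorm : ε ≤ ‖z‖ := by
    have : Tendsto (fun k => ‖j₀ (y (φ k))‖) atTop (nhds ‖z‖) :=
      (continuous_norm.tendsto z).comp hconv
    refine le_of_tendsto_of_tendsto tendsto_const_nhds this ?_
    refine Eventually.of_forall fun k => ?_
    have := hy2 (φ k)
    nlinarith [norm_nonneg (j₁ (j₀ (y (φ k)))), Nat.cast_nonneg (α := ℝ) (φ k)]
  rw [hzz] at hznorm
  simp at hznorm
  linarith


lemma ofReal_norm_rpow {E : Type*} [SeminormedAddCommGroup E] (x : E) {p : ℝ} (hp : 0 ≤ p) :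
    ENNReal.ofReal (‖x‖ ^ p) = (‖x‖₊ : ℝ≥0∞) ^ p := by
  rw [← enorm_eq_nnnorm, ← ofReal_norm]
  exact (ENNReal.ofReal_rpow_of_nonneg (norm_nonneg x) hp).symm

/-- Hölder: `(∫ G)^p ≤ ν(univ)^(p-1) * ∫ G^p`. -/
lemma pow_lintegral_le {α : Type*} [MeasurableSpace α] (ν : Measure α) {G : α → ℝ≥0∞}
    (hG : AEMeasurable G ν) {p : ℝ} (hp : 1 < p) :
    (∫⁻ a, G a ∂ν) ^ p ≤ (ν Set.univ) ^ (p - 1) * ∫⁻ a, G a ^ p ∂ν := by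
  have hpq : p.HolderConjugate (p / (p - 1)) := Real.HolderConjugate.conjExponent hp
  have h2 := ENNReal.lintegral_mul_le_Lp_mul_Lq ν hpq hG
    (aemeasurable_const : AEMeasurable (fun _ => (1:ℝ≥0∞)) ν)
  simp only [Pi.mul_apply, mul_one, ENNReal.one_rpow, lintegral_one] at h2
  calc (∫⁻ a, G a ∂ν) ^ p
      ≤ ((∫⁻ a, G a ^ p ∂ν) ^ (1/p) * ν Set.univ ^ (1/(p/(p-1)))) ^ p :=
        ENNReal.rpow_le_rpow h2 (by linarith)
    _ = (∫⁻ a, G a ^ p ∂ν) ^ ((1/p)*p) * ν Set.univ ^ ((1/(p/(p-1)))*p) := by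
        rw [ENNReal.mul_rpow_of_nonneg _ _ (by linarith : (0:ℝ) ≤ p),
          ← ENNReal.rpow_mul, ← ENNReal.rpow_mul]
    _ = (ν Set.univ) ^ (p - 1) * ∫⁻ a, G a ^ p ∂ν := by
        have hp0 : p ≠ 0 := by linarith
        have hp1 : p - 1 ≠ 0 := by intro h; exact absurd (by linarith : p = 1) (by linarith)
        rw [one_div_mul_cancel hp0]
        rw [show (1/(p/(p-1)))*p = p - 1 by field_simp]
        rw [ENNReal.rpow_one, mul_comm]

/-- Jensen-type estimate for the average of `f` on `Ico a (a+h)`. -/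
lemma avg_jensen {E : Type*} [NormedAddCommGroup E] [NormedSpace ℝ E] [CompleteSpace E]
    {f : ℝ → E} {a h : ℝ} (hh : 0 < h)
    (hfm : AEStronglyMeasurable f (volume.restrict (Set.Ico a (a + h))))
    (hfi : IntegrableOn f (Set.Ico a (a + h)) volume)
    {p : ℝ} (hp : 1 < p) (x : E) :
    (‖x - h⁻¹ • ∫ s in Set.Ico a (a + h), f s‖₊ : ℝ≥0∞) ^ p
      ≤ (ENNReal.ofReal h)⁻¹ * ∫⁻ s in Set.Ico a (a + h), (‖x - f s‖₊ : ℝ≥0∞) ^ p := by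
  set I := Set.Ico a (a + h) with hI
  have hvol : volume I = ENNReal.ofReal h := by
    rw [hI, Real.volume_Ico]; congr 1; ring
  have hconst : IntegrableOn (fun _ : ℝ => x) I volume := by
    refine integrableOn_const (hs := ?_)
    rw [hvol]; exact ENNReal.ofReal_ne_top
  have key : x - h⁻¹ • ∫ s in I, f s = h⁻¹ • ∫ s in I, (x - f s) := by
    rw [integral_sub hconst hfi, setIntegral_const, measureReal_def, hvol,
      ENNReal.toReal_ofReal hh.le, smul_sub, smul_smul, inv_mul_cancel₀ hh.ne', one_smul]
  rw [key]
  have hb : ENNReal.ofReal h ≠ 0 := by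
    simp [ENNReal.ofReal_eq_zero, not_le, hh]
  have hbt : ENNReal.ofReal h ≠ ⊤ := ENNReal.ofReal_ne_top
  have step1 : (‖h⁻¹ • ∫ s in I, (x - f s)‖₊ : ℝ≥0∞)
      ≤ (ENNReal.ofReal h)⁻¹ * ∫⁻ s in I, (‖x - f s‖₊ : ℝ≥0∞) := by
    rw [nnnorm_smul]
    push_cast
    have h1 : (‖h⁻¹‖₊ : ℝ≥0∞) = (ENNReal.ofReal h)⁻¹ := by
      rw [← enorm_eq_nnnorm, ← ofReal_norm, Real.norm_of_nonneg (inv_nonneg.2 hh.le),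
        ENNReal.ofReal_inv_of_pos hh]
    rw [h1]
    exact mul_le_mul_right (enorm_integral_le_lintegral_enorm _) _
  calc (‖h⁻¹ • ∫ s in I, (x - f s)‖₊ : ℝ≥0∞) ^ p
      ≤ ((ENNReal.ofReal h)⁻¹ * ∫⁻ s in I, (‖x - f s‖₊ : ℝ≥0∞)) ^ p :=
        ENNReal.rpow_le_rpow step1 (by linarith)
    _ = (ENNReal.ofReal h)⁻¹ ^ p * (∫⁻ s in I, (‖x - f s‖₊ : ℝ≥0∞)) ^ p := by
        rw [ENNReal.mul_rpow_of_nonneg _ _ (by linarith : (0:ℝ) ≤ p)]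
    _ ≤ (ENNReal.ofReal h)⁻¹ ^ p *
          ((volume.restrict I) Set.univ ^ (p-1) * ∫⁻ s in I, (‖x - f s‖₊ : ℝ≥0∞) ^ p) := by
        refine mul_le_mul_right ?_ _
        exact pow_lintegral_le _ ((aestronglyMeasurable_const.sub hfm).enorm) hp
    _ = (ENNReal.ofReal h)⁻¹ * ∫⁻ s in I, (‖x - f s‖₊ : ℝ≥0∞) ^ p := by
        rw [Measure.restrict_apply_univ, hvol, ← mul_assoc]
        congr 1
        rw [ENNReal.inv_rpow, ← ENNReal.rpow_neg, ← ENNReal.rpow_add _ _ hb hbt,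
          ← ENNReal.rpow_neg_one (ENNReal.ofReal h)]
        ring_nf


variable {E F : Type*} [NormedAddCommGroup E] [NormedSpace ℝ E] [CompleteSpace E]
  [NormedAddCommGroup F] [NormedSpace ℝ F] [CompleteSpace F]

/-- The piecewise-constant averaging of `f` over the partition of `[0, N*h)`
into intervals of length `h`. -/
noncomputable def pc (f : ℝ → E) (h : ℝ) (N : ℕ) : ℝ → E :=
  fun t => ∑ k ∈ Finset.range N,
    (Set.Ico ((k:ℝ)*h) ((k:ℝ)*h + h)).indicator
      (fun _ => h⁻¹ • ∫ s in Set.Ico ((k:ℝ)*h) ((k:ℝ)*h + h), f s) t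

lemma mem_Ico_unique {h : ℝ} (hh : 0 < h) {k k' : ℕ} {t : ℝ}
    (ht : t ∈ Set.Ico ((k:ℝ)*h) ((k:ℝ)*h + h))
    (ht' : t ∈ Set.Ico ((k':ℝ)*h) ((k':ℝ)*h + h)) : k = k' := by
  obtain ⟨h1, h2⟩ := ht
  obtain ⟨h3, h4⟩ := ht'
  have e1 : (k:ℝ) * h < ((k':ℝ) + 1) * h := by nlinarith
  have e2 : (k':ℝ) * h < ((k:ℝ) + 1) * h := by nlinarith
  have e1' : (k:ℝ) < (k':ℝ) + 1 := lt_of_mul_lt_mul_right (by linarith [e1]) hh.le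
  have e2' : (k':ℝ) < (k:ℝ) + 1 := lt_of_mul_lt_mul_right (by linarith [e2]) hh.le
  have : k < k' + 1 := by exact_mod_cast e1'
  have : k' < k + 1 := by exact_mod_cast e2'
  omega

omit [CompleteSpace E] in
lemma pc_apply (f : ℝ → E) {h : ℝ} (hh : 0 < h) {N k : ℕ} (hk : k < N) {t : ℝ}
    (ht : t ∈ Set.Ico ((k:ℝ)*h) ((k:ℝ)*h + h)) :
    pc f h N t = h⁻¹ • ∫ s in Set.Ico ((k:ℝ)*h) ((k:ℝ)*h + h), f s := by
  unfold pc
  rw [Finset.sum_eq_single_of_mem k (Finset.mem_range.2 hk)]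
  · rw [Set.indicator_of_mem ht]
  · intro k' _ hne
    refine Set.indicator_of_notMem (fun ht' => hne ?_) _
    exact (mem_Ico_unique hh ht' ht)

omit [CompleteSpace E] in
lemma pc_stronglyMeasurable (f : ℝ → E) (h : ℝ) (N : ℕ) :
    StronglyMeasurable (pc f h N) := by
  apply Finset.stronglyMeasurable_fun_sum
  intro k _
  exact stronglyMeasurable_const.indicator measurableSet_Ico

lemma pc_comp_clm (j : E →L[ℝ] F) {f : ℝ → E} {h : ℝ} {N : ℕ}
    (hfi : ∀ k, k < N → IntegrableOn f (Set.Ico ((k:ℝ)*h) ((k:ℝ)*h + h)) volume) (t : ℝ) :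
    j (pc f h N t) = pc (fun s => j (f s)) h N t := by
  unfold pc
  rw [map_sum]
  refine Finset.sum_congr rfl fun k hk => ?_
  rw [Set.indicator_apply, Set.indicator_apply]
  split_ifs with hmem
  · rw [_root_.map_smul, ContinuousLinearMap.integral_comp_comm j (hfi k (Finset.mem_range.1 hk))]
  · exact map_zero j

lemma lintegral_pc_split {h : ℝ} (hh : 0 < h) (N : ℕ) (F' : ℝ → ℝ≥0∞) :
    ∫⁻ t in Set.Ico (0:ℝ) ((N:ℝ)*h), F' t
      = ∑ k ∈ Finset.range N, ∫⁻ t in Set.Ico ((k:ℝ)*h) ((k:ℝ)*h + h), F' t := by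
  induction N with
  | zero => simp
  | succ n ih =>
    have hcast : ((n+1:ℕ):ℝ) * h = (n:ℝ)*h + h := by push_cast; ring
    have hunion : Set.Ico (0:ℝ) ((n:ℝ)*h) ∪ Set.Ico ((n:ℝ)*h) ((n:ℝ)*h + h)
        = Set.Ico (0:ℝ) ((n:ℝ)*h + h) :=
      Set.Ico_union_Ico_eq_Ico (by positivity) (by linarith)
    rw [hcast, ← hunion, lintegral_union measurableSet_Ico (Set.Ico_disjoint_Ico_same),
      ih, Finset.sum_range_succ]

lemma subset_big {h : ℝ} (hh : 0 < h) {N k : ℕ} (hk : k < N) :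
    Set.Ico ((k:ℝ)*h) ((k:ℝ)*h + h) ⊆ Set.Ico (0:ℝ) ((N:ℝ)*h) := by
  have h1 : (0:ℝ) ≤ (k:ℝ)*h := by positivity
  have h2 : (k:ℝ)*h + h ≤ (N:ℝ)*h := by
    have : (k:ℝ) + 1 ≤ (N:ℝ) := by exact_mod_cast hk
    nlinarith
  exact Set.Ico_subset_Ico h1 h2

lemma pc_lintegral_le {f : ℝ → E} (hfm : StronglyMeasurable f) {h : ℝ} (hh : 0 < h) {N : ℕ}
    (hfi : ∀ k, k < N → IntegrableOn f (Set.Ico ((k:ℝ)*h) ((k:ℝ)*h + h)) volume)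
    {p : ℝ} (hp : 1 < p) :
    ∫⁻ t in Set.Ico (0:ℝ) ((N:ℝ)*h), (‖pc f h N t‖₊ : ℝ≥0∞) ^ p
      ≤ ∫⁻ t in Set.Ico (0:ℝ) ((N:ℝ)*h), (‖f t‖₊ : ℝ≥0∞) ^ p := by
  have hb : ENNReal.ofReal h ≠ 0 := by simp [ENNReal.ofReal_eq_zero, not_le, hh]
  have hbt : ENNReal.ofReal h ≠ ⊤ := ENNReal.ofReal_ne_top
  rw [lintegral_pc_split hh, lintegral_pc_split hh]
  refine Finset.sum_le_sum fun k hk => ?_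
  have hk' := Finset.mem_range.1 hk
  set I := Set.Ico ((k:ℝ)*h) ((k:ℝ)*h + h) with hI
  have hvol : volume I = ENNReal.ofReal h := by
    rw [hI, Real.volume_Ico]; congr 1; ring
  have e1 : ∫⁻ t in I, (‖pc f h N t‖₊ : ℝ≥0∞) ^ p
      = ENNReal.ofReal h * (‖h⁻¹ • ∫ s in I, f s‖₊ : ℝ≥0∞) ^ p := by
    rw [setLIntegral_congr_fun measurableSet_Ico
      (fun t ht => by rw [pc_apply f hh hk' ht])]
    rw [setLIntegral_const, hvol, mul_comm]
  rw [e1]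
  have e2 := avg_jensen hh (hfm.aestronglyMeasurable.restrict) (hfi k hk') hp (0 : E)
  simp only [zero_sub, nnnorm_neg] at e2
  calc ENNReal.ofReal h * (‖h⁻¹ • ∫ s in I, f s‖₊ : ℝ≥0∞) ^ p
      ≤ ENNReal.ofReal h * ((ENNReal.ofReal h)⁻¹ * ∫⁻ s in I, (‖f s‖₊ : ℝ≥0∞) ^ p) :=
        mul_le_mul_right e2 _
    _ = ∫⁻ s in I, (‖f s‖₊ : ℝ≥0∞) ^ p := by
        rw [← mul_assoc, ENNReal.mul_inv_cancel hb hbt, one_mul]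

lemma pc_frac_le {g : ℝ → E} (hgm : StronglyMeasurable g) {h : ℝ} (hh : 0 < h) {N : ℕ}
    (hgi : ∀ k, k < N → IntegrableOn g (Set.Ico ((k:ℝ)*h) ((k:ℝ)*h + h)) volume)
    {p α : ℝ} (hp : 1 < p) (hα : 0 < α) :
    ∫⁻ t in Set.Ico (0:ℝ) ((N:ℝ)*h), (‖g t - pc g h N t‖₊ : ℝ≥0∞) ^ p
      ≤ ENNReal.ofReal (h ^ (α*p)) *
        ∫⁻ t in Set.Ico (0:ℝ) ((N:ℝ)*h), ∫⁻ s in Set.Ico (0:ℝ) ((N:ℝ)*h),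
          ENNReal.ofReal (‖g t - g s‖ ^ p / |t - s| ^ (1 + α*p)) := by
  have hb : ENNReal.ofReal h ≠ 0 := by simp [ENNReal.ofReal_eq_zero, not_le, hh]
  have hbt : ENNReal.ofReal h ≠ ⊤ := ENNReal.ofReal_ne_top
  have hp0 : (0:ℝ) < p := by linarith
  have hexp : (0:ℝ) ≤ 1 + α*p := by nlinarith
  set J := Set.Ico (0:ℝ) ((N:ℝ)*h) with hJ
  set Inner : ℝ → ℝ≥0∞ := fun t => ∫⁻ s in J, ENNReal.ofReal (‖g t - g s‖ ^ p / |t - s| ^ (1 + α*p))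
    with hInner
  rw [lintegral_pc_split hh, show ∫⁻ t in J, Inner t = ∑ k ∈ Finset.range N,
      ∫⁻ t in Set.Ico ((k:ℝ)*h) ((k:ℝ)*h + h), Inner t from lintegral_pc_split hh N Inner,
    Finset.mul_sum]
  refine Finset.sum_le_sum fun k hk => ?_
  have hk' := Finset.mem_range.1 hk
  set I := Set.Ico ((k:ℝ)*h) ((k:ℝ)*h + h) with hI
  have hpt : ∀ t ∈ I, (‖g t - pc g h N t‖₊ : ℝ≥0∞) ^ p
      ≤ ENNReal.ofReal (h ^ (α*p)) * Inner t := by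
    intro t ht
    rw [pc_apply g hh hk' ht]
    have e1 := avg_jensen hh (hgm.aestronglyMeasurable.restrict) (hgi k hk') hp (g t)
    refine e1.trans ?_
    have e2 : ∀ s ∈ I, (‖g t - g s‖₊ : ℝ≥0∞) ^ p
        ≤ ENNReal.ofReal (h ^ (1 + α*p)) *
          ENNReal.ofReal (‖g t - g s‖ ^ p / |t - s| ^ (1 + α*p)) := by
      intro s hs
      rw [← ofReal_norm_rpow _ hp0.le, ← ENNReal.ofReal_mul (by positivity)]
      refine ENNReal.ofReal_le_ofReal ?_
      rcases eq_or_ne t s with rfl | hts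
      · rw [sub_self, norm_zero, Real.zero_rpow hp0.ne']
        positivity
      · have habs : |t - s| < h := by
          rw [abs_sub_lt_iff]
          constructor <;> [skip; skip] <;>
          · obtain ⟨a1, a2⟩ := ht; obtain ⟨a3, a4⟩ := hs; linarith
        have habs0 : 0 < |t - s| := abs_pos.2 (sub_ne_zero.2 hts)
        have hkey : ‖g t - g s‖ ^ p
            = (‖g t - g s‖ ^ p / |t - s| ^ (1 + α*p)) * |t - s| ^ (1 + α*p) := by
          rw [div_mul_cancel₀]
          exact (Real.rpow_pos_of_pos habs0 _).ne'
        calc ‖g t - g s‖ ^ p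
            = (‖g t - g s‖ ^ p / |t - s| ^ (1 + α*p)) * |t - s| ^ (1 + α*p) := hkey
          _ ≤ (‖g t - g s‖ ^ p / |t - s| ^ (1 + α*p)) * h ^ (1 + α*p) :=
              mul_le_mul_of_nonneg_left
                (Real.rpow_le_rpow (abs_nonneg _) habs.le hexp) (by positivity)
          _ = h ^ (1 + α*p) * (‖g t - g s‖ ^ p / |t - s| ^ (1 + α*p)) := mul_comm _ _
    have e3 : ∫⁻ s in I, (‖g t - g s‖₊ : ℝ≥0∞) ^ p
        ≤ ENNReal.ofReal (h ^ (1 + α*p)) * Inner t := by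
      calc ∫⁻ s in I, (‖g t - g s‖₊ : ℝ≥0∞) ^ p
          ≤ ∫⁻ s in I, ENNReal.ofReal (h ^ (1 + α*p)) *
              ENNReal.ofReal (‖g t - g s‖ ^ p / |t - s| ^ (1 + α*p)) :=
            lintegral_mono_ae ((ae_restrict_iff' measurableSet_Ico).2
              (Eventually.of_forall e2))
        _ = ENNReal.ofReal (h ^ (1 + α*p)) *
              ∫⁻ s in I, ENNReal.ofReal (‖g t - g s‖ ^ p / |t - s| ^ (1 + α*p)) :=
            lintegral_const_mul' _ _ ENNReal.ofReal_ne_top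
        _ ≤ ENNReal.ofReal (h ^ (1 + α*p)) * Inner t := by
            refine mul_le_mul_right ?_ _
            exact lintegral_mono_set (by rw [hJ]; exact subset_big hh hk')
    refine (mul_le_mul_right e3 _).trans ?_
    rw [show h ^ (1 + α*p) = h * h ^ (α*p) by
      rw [Real.rpow_add hh, Real.rpow_one]]
    rw [ENNReal.ofReal_mul hh.le, ← mul_assoc, ← mul_assoc,
      ENNReal.inv_mul_cancel hb hbt, one_mul]
  calc ∫⁻ t in I, (‖g t - pc g h N t‖₊ : ℝ≥0∞) ^ p
      ≤ ∫⁻ t in I, ENNReal.ofReal (h ^ (α*p)) * Inner t :=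
        lintegral_mono_ae ((ae_restrict_iff' measurableSet_Ico).2 (Eventually.of_forall hpt))
    _ = ENNReal.ofReal (h ^ (α*p)) * ∫⁻ t in I, Inner t :=
        lintegral_const_mul' _ _ ENNReal.ofReal_ne_top


lemma Lp_coeFn_sum {α E ι : Type*} [MeasurableSpace α] {μ : Measure α} [NormedAddCommGroup E]
    {q : ℝ≥0∞} (s : Finset ι) (w : ι → Lp E q μ) :
    ⇑(∑ i ∈ s, w i) =ᵐ[μ] fun t => ∑ i ∈ s, w i t := by
  classical
  induction s using Finset.induction_on with
  | empty => simp only [Finset.sum_empty]; exact Lp.coeFn_zero E q μ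
  | insert a s' hx ih =>
    rw [Finset.sum_insert hx]
    filter_upwards [Lp.coeFn_add (w a) (∑ i ∈ s', w i), ih] with t h1 h2
    rw [h1]
    simp only [Pi.add_apply, h2, Finset.sum_insert hx]

lemma eLpNorm_ofReal {α E : Type*} [MeasurableSpace α] {μ : Measure α} [NormedAddCommGroup E]
    {p : ℝ} (hp : 1 < p) (w : α → E) :
    eLpNorm w (ENNReal.ofReal p) μ = (∫⁻ a, (‖w a‖₊ : ℝ≥0∞) ^ p ∂μ) ^ (1/p) := by
  rw [eLpNorm_eq_lintegral_rpow_enorm_toReal (by simp [ENNReal.ofReal_eq_zero]; linarith)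
    ENNReal.ofReal_ne_top, ENNReal.toReal_ofReal (by linarith : (0:ℝ) ≤ p)]
  rfl

lemma lintegral_eq_eLpNorm_rpow {α E : Type*} [MeasurableSpace α] {μ : Measure α}
    [NormedAddCommGroup E] {p : ℝ} (hp : 1 < p) (w : α → E) :
    ∫⁻ a, (‖w a‖₊ : ℝ≥0∞) ^ p ∂μ = (eLpNorm w (ENNReal.ofReal p) μ) ^ p := by
  rw [eLpNorm_ofReal hp, ← ENNReal.rpow_mul, one_div,
    inv_mul_cancel₀ (by linarith : p ≠ 0), ENNReal.rpow_one]

lemma totallyBounded_of_compact_approx {X : Type*} [PseudoMetricSpace X] {s : Set X}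
    (happ : ∀ ε : ℝ, 0 < ε → ∃ K : Set X, IsCompact K ∧ ∀ x ∈ s, ∃ y ∈ K, dist x y ≤ ε) :
    TotallyBounded s := by
  rw [Metric.totallyBounded_iff]
  intro ε hε
  obtain ⟨K, hK, hKa⟩ := happ (ε/3) (by linarith)
  obtain ⟨t, htfin, htcov⟩ := Metric.totallyBounded_iff.1 hK.totallyBounded (ε/3) (by linarith)
  refine ⟨t, htfin, fun x hx => ?_⟩
  obtain ⟨y, hyK, hxy⟩ := hKa x hx
  obtain ⟨z, hzt, hz⟩ := Set.mem_iUnion₂.1 (htcov hyK)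
  rw [Metric.mem_ball] at hz
  refine Set.mem_iUnion₂.2 ⟨z, hzt, Metric.mem_ball.2 ?_⟩
  calc dist x z ≤ dist x y + dist y z := dist_triangle _ _ _
    _ < ε := by linarith

lemma continuous_sum_indicatorConstLp {α E : Type*} [MeasurableSpace α] {μ : Measure α}
    [NormedAddCommGroup E] {q : ℝ≥0∞} [Fact (1 ≤ q)] (hqt : q ≠ ∞) {N : ℕ}
    {S : Fin N → Set α} (hS : ∀ k, MeasurableSet (S k)) (hSf : ∀ k, μ (S k) ≠ ∞) :
    Continuous fun z : Fin N → E =>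
      ∑ k : Fin N, indicatorConstLp q (hS k) (hSf k) (z k) := by
  have hq0 : q ≠ 0 := by
    have := Fact.out (p := 1 ≤ q); intro h; rw [h] at this; simp at this
  refine continuous_finset_sum _ fun k _ => ?_
  set Rk := (μ (S k)).toReal ^ (1 / q.toReal) with hRk
  have hdist : ∀ c c' : E, dist (indicatorConstLp q (hS k) (hSf k) c)
      (indicatorConstLp q (hS k) (hSf k) c') = ‖c - c'‖ * Rk := by
    intro c c'
    rw [dist_eq_norm, indicatorConstLp_sub, norm_indicatorConstLp hq0 hqt, measureReal_def, ← hRk]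
  have hRk0 : 0 ≤ Rk := Real.rpow_nonneg ENNReal.toReal_nonneg _
  have hcont : Continuous fun c : E => indicatorConstLp q (hS k) (hSf k) c := by
    refine Metric.continuous_iff.2 fun c ε hε => ⟨ε / (Rk + 1), by positivity, fun c' hc' => ?_⟩
    rw [hdist]
    have h1 : ‖c' - c‖ = dist c' c := (dist_eq_norm _ _).symm
    calc ‖c' - c‖ * Rk ≤ dist c' c * (Rk + 1) := by
          rw [h1]; nlinarith [dist_nonneg (x := c') (y := c)]
      _ < ε := by
          have h2 := mul_lt_mul_of_pos_right hc' (by positivity : (0:ℝ) < Rk + 1)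
          rwa [div_mul_cancel₀ _ (by positivity : (Rk+1) ≠ 0)] at h2
  exact hcont.comp (continuous_apply k)


lemma eLpNorm_const_mul_norm {α E : Type*} [MeasurableSpace α] {μ : Measure α}
    [NormedAddCommGroup E] {c : ℝ} (hc : 0 ≤ c) (w : α → E) (q : ℝ≥0∞) :
    eLpNorm (fun t => c * ‖w t‖) q μ = ENNReal.ofReal c * eLpNorm w q μ := by
  have h1 : (fun t => c * ‖w t‖) = c • (fun t => ‖w t‖) := by
    funext t; simp
  rw [h1, eLpNorm_const_smul, eLpNorm_norm]
  congr 1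
  rw [← ofReal_norm, Real.norm_of_nonneg hc]

end FGaux

set_option maxHeartbeats 1000000 in
open FGaux in
/-- Compactness of the embedding `L^p([0,T];B₀) ∩ W^{α,p}([0,T];B₁) ⊆ L^p([0,T];B)`
(Flandoli–Gatarek / Lemma 5.1 of the paper). The Banach spaces `B₀ ⊆ B ⊆ B₁` are encoded by
injective continuous linear maps `j₀ : B₀ → B` and `j₁ : B → B₁`, with `B₀, B₁` reflexive
(the inclusion into the double dual is surjective) and `j₀` a compact operator (mapping
bounded sets to relatively compact sets). -/
theorem compact_embedding_Lp_cap_WalphaP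
    {B₀ B B₁ : Type*}
    [NormedAddCommGroup B₀] [NormedSpace ℝ B₀] [CompleteSpace B₀]
    [NormedAddCommGroup B] [NormedSpace ℝ B] [CompleteSpace B]
    [NormedAddCommGroup B₁] [NormedSpace ℝ B₁] [CompleteSpace B₁]
    (hrefl₀ : Function.Surjective (NormedSpace.inclusionInDoubleDual ℝ B₀))
    (hrefl₁ : Function.Surjective (NormedSpace.inclusionInDoubleDual ℝ B₁))
    (j₀ : B₀ →L[ℝ] B) (hj₀inj : Function.Injective j₀)
    (hj₀cpt : ∀ s : Set B₀, Bornology.IsBounded s → IsCompact (closure (⇑j₀ '' s)))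
    (j₁ : B →L[ℝ] B₁) (hj₁inj : Function.Injective j₁)
    (T : ℝ) (hT : 0 < T) (p : ℝ) (hp : 1 < p) (α : ℝ) (hα : α ∈ Set.Ioo (0 : ℝ) 1)
    (u : ℕ → ℝ → B₀)
    (humeas : ∀ n, AEStronglyMeasurable (u n) (volume.restrict (Set.Icc 0 T)))
    (C : ENNReal) (hC : C < ⊤)
    (hbound : ∀ n,
      (∫⁻ t in Set.Icc 0 T, ENNReal.ofReal (‖u n t‖ ^ p)) +
        (∫⁻ t in Set.Icc 0 T, ∫⁻ s in Set.Icc 0 T,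
          ENNReal.ofReal (‖j₁ (j₀ (u n t)) - j₁ (j₀ (u n s))‖ ^ p / |t - s| ^ (1 + α * p))) ≤
        C) :
    ∃ φ : ℕ → ℕ, StrictMono φ ∧ ∃ v : ℝ → B,
      AEStronglyMeasurable v (volume.restrict (Set.Icc 0 T)) ∧
      (∫⁻ t in Set.Icc 0 T, ENNReal.ofReal (‖v t‖ ^ p)) < ⊤ ∧
      Tendsto (fun k => ∫⁻ t in Set.Icc 0 T, ENNReal.ofReal (‖j₀ (u (φ k) t) - v t‖ ^ p))
        atTop (nhds 0) := by
  classical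
  obtain ⟨hα0, hα1⟩ := hα
  have hp0 : (0:ℝ) < p := by linarith
  have hμeq : volume.restrict (Set.Icc (0:ℝ) T) = volume.restrict (Set.Ico (0:ℝ) T) :=
    (Measure.restrict_congr_set Ico_ae_eq_Icc).symm
  rw [hμeq] at humeas hbound ⊢
  set μ : Measure ℝ := volume.restrict (Set.Ico 0 T) with hμdef
  haveI : IsFiniteMeasure μ := ⟨by
    rw [hμdef, Measure.restrict_apply_univ, Real.volume_Ico]; exact ENNReal.ofReal_lt_top⟩
  set q : ℝ≥0∞ := ENNReal.ofReal p with hqdef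
  have hq1 : 1 ≤ q := ENNReal.one_le_ofReal.2 hp.le
  haveI : Fact (1 ≤ q) := ⟨hq1⟩
  have hqt : q ≠ ∞ := ENNReal.ofReal_ne_top
  set f : ℕ → ℝ → B₀ := fun n => (humeas n).mk (u n) with hfdef
  have hfsm : ∀ n, StronglyMeasurable (f n) := fun n => (humeas n).stronglyMeasurable_mk
  have hfae : ∀ n, u n =ᵐ[μ] f n := fun n => (humeas n).ae_eq_mk
  set g : ℕ → ℝ → B₁ := fun n t => j₁ (j₀ (f n t)) with hgdef
  have hgsm : ∀ n, StronglyMeasurable (g n) := fun n =>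
    (j₁.comp j₀).continuous.comp_stronglyMeasurable (hfsm n)
  have hbound1 : ∀ n, (∫⁻ t, (‖f n t‖₊ : ℝ≥0∞) ^ p ∂μ) ≤ C := by
    intro n
    refine le_trans (le_of_eq ?_) (le_trans le_self_add (hbound n))
    refine (lintegral_congr_ae ?_).symm
    filter_upwards [hfae n] with t ht
    rw [ht, ofReal_norm_rpow _ hp0.le]
  have hbound2 : ∀ n, (∫⁻ t, ∫⁻ s, ENNReal.ofReal
      (‖g n t - g n s‖ ^ p / |t - s| ^ (1 + α * p)) ∂μ ∂μ) ≤ C := by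
    intro n
    refine le_trans (le_of_eq ?_) (le_trans le_add_self (hbound n))
    refine (lintegral_congr_ae ?_).symm
    filter_upwards [hfae n] with t ht
    refine lintegral_congr_ae ?_
    filter_upwards [hfae n] with s hs
    rw [ht, hs]
  have hfmem : ∀ n, MemLp (f n) q μ := by
    intro n
    refine ⟨(hfsm n).aestronglyMeasurable, ?_⟩
    rw [hqdef, FGaux.eLpNorm_ofReal hp]
    exact lt_of_le_of_lt (ENNReal.rpow_le_rpow (hbound1 n) (by positivity))
      (ENNReal.rpow_lt_top_of_nonneg (by positivity) hC.ne)
  have hfint : ∀ n, Integrable (f n) μ := fun n => (hfmem n).integrable hq1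
  have hXmem : ∀ n, MemLp (fun t => j₀ (f n t)) q μ := fun n => j₀.comp_memLp' (hfmem n)
  set X : ℕ → Lp B q μ := fun n => ((hXmem n).toLp _) with hXdef
  have hMfin : C ^ (1/p) ≠ ⊤ := ENNReal.rpow_ne_top_of_nonneg (by positivity) hC.ne
  set Mr : ℝ := (C ^ (1/p)).toReal with hMrdef
  have hMr0 : (0:ℝ) ≤ Mr := ENNReal.toReal_nonneg
  have hMle : C ^ (1/p) ≤ ENNReal.ofReal Mr := by rw [hMrdef, ENNReal.ofReal_toReal hMfin]
  have hfsn : ∀ n, eLpNorm (f n) q μ ≤ ENNReal.ofReal Mr := by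
    intro n
    rw [hqdef, FGaux.eLpNorm_ofReal hp]
    exact le_trans (ENNReal.rpow_le_rpow (hbound1 n) (by positivity)) hMle
  set A : ℝ≥0∞ := ((ENNReal.ofReal T) ^ (p-1) * C) ^ (1/p) with hAdef
  have hAfin : A ≠ ⊤ := by
    rw [hAdef]
    refine ENNReal.rpow_ne_top_of_nonneg (by positivity) ?_
    exact ENNReal.mul_ne_top
      (ENNReal.rpow_ne_top_of_nonneg (by linarith) ENNReal.ofReal_ne_top) hC.ne
  have hL1 : ∀ n, (∫⁻ t, (‖f n t‖₊ : ℝ≥0∞) ∂μ) ≤ A := by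
    intro n
    have h1 := pow_lintegral_le μ ((hfsm n).aestronglyMeasurable.enorm) hp
    have h2 : μ Set.univ = ENNReal.ofReal T := by
      rw [hμdef, Measure.restrict_apply_univ, Real.volume_Ico, sub_zero]
    rw [h2] at h1
    have h3 : (∫⁻ t, (‖f n t‖₊ : ℝ≥0∞) ∂μ) ^ p ≤ (ENNReal.ofReal T) ^ (p-1) * C :=
      h1.trans (mul_le_mul_right (hbound1 n) _)
    calc (∫⁻ t, (‖f n t‖₊ : ℝ≥0∞) ∂μ)
        = ((∫⁻ t, (‖f n t‖₊ : ℝ≥0∞) ∂μ) ^ p) ^ (1/p) := by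
          rw [← ENNReal.rpow_mul, mul_one_div, div_self hp0.ne', ENNReal.rpow_one]
      _ ≤ A := by rw [hAdef]; exact ENNReal.rpow_le_rpow h3 (by positivity)
  -- the key approximation step
  have key : ∀ ε : ℝ, 0 < ε → ∃ K : Set (Lp B q μ), IsCompact K ∧
      ∀ n, ∃ y ∈ K, dist (X n) y ≤ ε := by
    intro ε hε
    set ε₁ : ℝ := ε / (8 * (Mr + 1)) with hε₁def
    have hε₁0 : 0 < ε₁ := by positivity
    obtain ⟨c, hc0, hehr⟩ := ehrling j₀ hj₀cpt j₁ hj₁inj hε₁0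
    set τ : ℝ := ε / (8 * (c + 1) * (Mr + 1)) with hτdef
    have hτ0 : 0 < τ := by positivity
    obtain ⟨N₀, hN₀⟩ := exists_nat_gt (T / τ ^ (1/α))
    set N : ℕ := max N₀ 1 with hNdef
    have hN1 : 1 ≤ N := le_max_right _ _
    have hNpos : (0:ℝ) < (N:ℝ) := by
      have : 0 < N := lt_of_lt_of_le Nat.zero_lt_one hN1
      exact_mod_cast this
    set h : ℝ := T / N with hhdef
    have hhpos : 0 < h := div_pos hT hNpos
    have hNT : (N:ℝ) * h = T := by rw [hhdef]; field_simp
    have hμ' : μ = volume.restrict (Set.Ico (0:ℝ) ((N:ℝ)*h)) := by rw [hμdef, hNT]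
    have hτα : h ^ α ≤ τ := by
      have hNN₀ : (N₀:ℝ) ≤ (N:ℝ) := by exact_mod_cast le_max_left N₀ 1
      have hlt : T / τ ^ (1/α) < (N:ℝ) := lt_of_lt_of_le hN₀ hNN₀
      have hτp : 0 < τ ^ (1/α) := Real.rpow_pos_of_pos hτ0 _
      have hlt2 : h < τ ^ (1/α) := by
        rw [hhdef, div_lt_iff₀ hNpos, mul_comm]
        have h5 := mul_lt_mul_of_pos_right hlt hτp
        rwa [div_mul_cancel₀ _ (ne_of_gt hτp)] at h5
      calc h ^ α ≤ (τ ^ (1/α)) ^ α := Real.rpow_le_rpow hhpos.le hlt2.le hα0.le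
        _ = τ := by rw [← Real.rpow_mul hτ0.le, one_div, inv_mul_cancel₀ hα0.ne',
            Real.rpow_one]
    have hIsub : ∀ k, k < N →
        Set.Ico ((k:ℝ)*h) ((k:ℝ)*h + h) ⊆ Set.Ico (0:ℝ) T := by
      intro k hk
      rw [← hNT]
      exact subset_big hhpos hk
    have hIint : ∀ n k, k < N → IntegrableOn (f n) (Set.Ico ((k:ℝ)*h) ((k:ℝ)*h + h)) volume := by
      intro n k hk
      exact IntegrableOn.mono_set (hfint n) (hIsub k hk)
    have hIint0 : ∀ n k, k < N →
        IntegrableOn (fun s => j₀ (f n s)) (Set.Ico ((k:ℝ)*h) ((k:ℝ)*h + h)) volume :=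
      fun n k hk => j₀.integrable_comp (hIint n k hk)
    have hIintg : ∀ n k, k < N →
        IntegrableOn (g n) (Set.Ico ((k:ℝ)*h) ((k:ℝ)*h + h)) volume :=
      fun n k hk => (j₁.comp j₀).integrable_comp (hIint n k hk)
    set R : ℝ := h⁻¹ * A.toReal with hRdef
    have hcR : ∀ n k, k < N → ‖h⁻¹ • ∫ s in Set.Ico ((k:ℝ)*h) ((k:ℝ)*h + h), f n s‖ ≤ R := by
      intro n k hk
      rw [norm_smul, Real.norm_of_nonneg (inv_nonneg.2 hhpos.le), hRdef]
      refine mul_le_mul_of_nonneg_left ?_ (inv_nonneg.2 hhpos.le)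
      have h1 : (‖∫ s in Set.Ico ((k:ℝ)*h) ((k:ℝ)*h + h), f n s‖₊ : ℝ≥0∞)
          ≤ ∫⁻ s in Set.Ico ((k:ℝ)*h) ((k:ℝ)*h + h), (‖f n s‖₊ : ℝ≥0∞) :=
        enorm_integral_le_lintegral_enorm _
      have h2 : (∫⁻ s in Set.Ico ((k:ℝ)*h) ((k:ℝ)*h + h), (‖f n s‖₊ : ℝ≥0∞))
          ≤ ∫⁻ s, (‖f n s‖₊ : ℝ≥0∞) ∂μ := by
        rw [hμdef]
        exact lintegral_mono_set (hIsub k hk)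
      have h3 := ENNReal.toReal_mono hAfin (le_trans h1 (le_trans h2 (hL1 n)))
      simpa using h3
    set K₀ : Set B := closure (⇑j₀ '' Metric.closedBall 0 R) with hK₀def
    have hK₀cpt : IsCompact K₀ := hj₀cpt _ Metric.isBounded_closedBall
    have hμI : ∀ k : Fin N, μ (Set.Ico (((k:ℕ):ℝ)*h) (((k:ℕ):ℝ)*h + h)) ≠ ∞ :=
      fun k => ne_of_lt (lt_of_le_of_lt (measure_mono (Set.subset_univ _)) (measure_lt_top μ _))
    set Φ : (Fin N → B) → Lp B q μ := fun z =>
      ∑ k : Fin N, indicatorConstLp q measurableSet_Ico (hμI k) (z k) with hΦdef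
    have hΦcont : Continuous Φ :=
      continuous_sum_indicatorConstLp hqt (fun _ => measurableSet_Ico) hμI
    refine ⟨Φ '' (Set.univ.pi fun _ => K₀),
      (isCompact_univ_pi fun _ => hK₀cpt).image hΦcont, ?_⟩
    intro n
    set cv : Fin N → B := fun k => j₀ (h⁻¹ • ∫ s in Set.Ico (((k:ℕ):ℝ)*h) (((k:ℕ):ℝ)*h + h), f n s)
      with hcvdef
    have hcvmem : ∀ k : Fin N, cv k ∈ K₀ := fun k =>
      subset_closure ⟨_, Metric.mem_closedBall.2
        (by rw [dist_zero_right]; exact hcR n k.1 k.2), rfl⟩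
    refine ⟨Φ cv, Set.mem_image_of_mem _ (fun k _ => hcvmem k), ?_⟩
    have havg : ∀ k : Fin N, cv k
        = h⁻¹ • ∫ s in Set.Ico (((k:ℕ):ℝ)*h) (((k:ℕ):ℝ)*h + h), j₀ (f n s) := by
      intro k
      show j₀ (h⁻¹ • ∫ s in Set.Ico (((k:ℕ):ℝ)*h) (((k:ℕ):ℝ)*h + h), f n s) = _
      rw [_root_.map_smul, ContinuousLinearMap.integral_comp_comm j₀ (hIint n k.1 k.2)]
    have hpc_eq : (fun t => ∑ k : Fin N,
        (Set.Ico (((k:ℕ):ℝ)*h) (((k:ℕ):ℝ)*h + h)).indicator (fun _ => cv k) t)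
        = pc (fun s => j₀ (f n s)) h N := by
      funext t
      show _ = ∑ k ∈ Finset.range N, (Set.Ico ((k:ℝ)*h) ((k:ℝ)*h + h)).indicator
        (fun _ => h⁻¹ • ∫ s in Set.Ico ((k:ℝ)*h) ((k:ℝ)*h + h), j₀ (f n s)) t
      rw [← Fin.sum_univ_eq_sum_range]
      refine Finset.sum_congr rfl fun k _ => ?_
      rw [havg k]
    have hΦcoe : ⇑(Φ cv) =ᵐ[μ] pc (fun s => j₀ (f n s)) h N := by
      rw [hΦdef]
      refine (Lp_coeFn_sum Finset.univ _).trans ?_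
      have hall : ∀ᵐ t ∂μ, ∀ k : Fin N,
          (indicatorConstLp q measurableSet_Ico (hμI k) (cv k)) t
          = (Set.Ico (((k:ℕ):ℝ)*h) (((k:ℕ):ℝ)*h + h)).indicator (fun _ => cv k) t := by
        rw [ae_all_iff]
        intro k
        exact indicatorConstLp_coeFn
      filter_upwards [hall] with t ht
      rw [Finset.sum_congr rfl fun k _ => ht k]
      exact congrFun hpc_eq t
    have hXcoe : ⇑(X n) =ᵐ[μ] fun t => j₀ (f n t) := (hXmem n).coeFn_toLp
    rw [Lp.dist_def]
    refine ENNReal.toReal_le_of_le_ofReal hε.le ?_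
    have hsn0 : eLpNorm (⇑(X n) - ⇑(Φ cv)) q μ
        = eLpNorm (fun t => j₀ (f n t) - pc (fun s => j₀ (f n s)) h N t) q μ := by
      refine eLpNorm_congr_ae ?_
      filter_upwards [hXcoe, hΦcoe] with t h1 h2
      simp only [Pi.sub_apply, h1, h2]
    rw [hsn0]
    -- pointwise Ehrling estimate
    have hpcj : ∀ t, pc (fun s => j₀ (f n s)) h N t = j₀ (pc (f n) h N t) := fun t =>
      (pc_comp_clm j₀ (fun k hk => hIint n k hk) t).symm
    have hpcg : ∀ t, j₁ (j₀ (pc (f n) h N t)) = pc (g n) h N t := by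
      intro t
      rw [← hpcj t]
      exact pc_comp_clm j₁ (fun k hk => hIint0 n k hk) t
    have hptw : ∀ t, ‖j₀ (f n t) - pc (fun s => j₀ (f n s)) h N t‖
        ≤ ε₁ * ‖f n t‖ + (ε₁ * ‖pc (f n) h N t‖ + c * ‖g n t - pc (g n) h N t‖) := by
      intro t
      rw [hpcj t, ← map_sub]
      refine (hehr _).trans ?_
      have e2 : j₁ (j₀ (f n t - pc (f n) h N t)) = g n t - pc (g n) h N t := by
        rw [map_sub, map_sub, hpcg t]
      rw [e2]
      have e3 : ‖f n t - pc (f n) h N t‖ ≤ ‖f n t‖ + ‖pc (f n) h N t‖ := norm_sub_le _ _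
      nlinarith [hε₁0.le, norm_nonneg (g n t - pc (g n) h N t)]
    have hsm1 : AEStronglyMeasurable (fun t => ε₁ * ‖f n t‖) μ :=
      ((hfsm n).norm.aestronglyMeasurable).const_mul _
    have hsm2 : AEStronglyMeasurable (fun t => ε₁ * ‖pc (f n) h N t‖) μ :=
      ((pc_stronglyMeasurable (f n) h N).norm.aestronglyMeasurable).const_mul _
    have hsm3 : AEStronglyMeasurable (fun t => c * ‖g n t - pc (g n) h N t‖) μ :=
      (((hgsm n).sub (pc_stronglyMeasurable (g n) h N)).norm.aestronglyMeasurable).const_mul _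
    have hchain : eLpNorm (fun t => j₀ (f n t) - pc (fun s => j₀ (f n s)) h N t) q μ
        ≤ ENNReal.ofReal ε₁ * eLpNorm (f n) q μ
          + (ENNReal.ofReal ε₁ * eLpNorm (pc (f n) h N) q μ
            + ENNReal.ofReal c * eLpNorm (fun t => g n t - pc (g n) h N t) q μ) := by
      calc eLpNorm (fun t => j₀ (f n t) - pc (fun s => j₀ (f n s)) h N t) q μ
          ≤ eLpNorm (fun t => ε₁ * ‖f n t‖ + (ε₁ * ‖pc (f n) h N t‖
              + c * ‖g n t - pc (g n) h N t‖)) q μ := by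
            refine eLpNorm_mono fun t => ?_
            simpa [Real.norm_eq_abs] using (hptw t).trans (le_abs_self _)
        _ ≤ eLpNorm (fun t => ε₁ * ‖f n t‖) q μ
            + eLpNorm (fun t => ε₁ * ‖pc (f n) h N t‖
              + c * ‖g n t - pc (g n) h N t‖) q μ :=
            eLpNorm_add_le hsm1 (hsm2.add hsm3) hq1
        _ ≤ eLpNorm (fun t => ε₁ * ‖f n t‖) q μ
            + (eLpNorm (fun t => ε₁ * ‖pc (f n) h N t‖) q μ
              + eLpNorm (fun t => c * ‖g n t - pc (g n) h N t‖) q μ) :=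
            add_le_add_right (eLpNorm_add_le hsm2 hsm3 hq1) _
        _ = ENNReal.ofReal ε₁ * eLpNorm (f n) q μ
            + (ENNReal.ofReal ε₁ * eLpNorm (pc (f n) h N) q μ
              + ENNReal.ofReal c * eLpNorm (fun t => g n t - pc (g n) h N t) q μ) := by
            rw [eLpNorm_const_mul_norm hε₁0.le, eLpNorm_const_mul_norm hε₁0.le,
              eLpNorm_const_mul_norm hc0]
    have hbnd1 : eLpNorm (pc (f n) h N) q μ ≤ ENNReal.ofReal Mr := by
      rw [hqdef, FGaux.eLpNorm_ofReal hp, hμ']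
      have hlp : (∫⁻ t in Set.Ico (0:ℝ) ((N:ℝ)*h), (‖pc (f n) h N t‖₊ : ℝ≥0∞) ^ p) ≤ C := by
        refine le_trans (pc_lintegral_le (hfsm n) hhpos (fun k hk => hIint n k hk) hp) ?_
        rw [← hμ']
        exact hbound1 n
      exact le_trans (ENNReal.rpow_le_rpow hlp (by positivity)) hMle
    have hbnd2 : eLpNorm (fun t => g n t - pc (g n) h N t) q μ
        ≤ ENNReal.ofReal (h ^ α * Mr) := by
      rw [hqdef, FGaux.eLpNorm_ofReal hp, hμ']
      have hfr := pc_frac_le (hgsm n) hhpos (fun k hk => hIintg n k hk) hp hα0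
      have hD : (∫⁻ t in Set.Ico (0:ℝ) ((N:ℝ)*h), ∫⁻ s in Set.Ico (0:ℝ) ((N:ℝ)*h),
          ENNReal.ofReal (‖g n t - g n s‖ ^ p / |t - s| ^ (1 + α*p))) ≤ C := by
        rw [← hμ']
        exact hbound2 n
      have h2 : (∫⁻ t in Set.Ico (0:ℝ) ((N:ℝ)*h), (‖g n t - pc (g n) h N t‖₊ : ℝ≥0∞) ^ p)
          ≤ ENNReal.ofReal (h ^ (α*p)) * C := le_trans hfr (mul_le_mul_right hD _)
      calc (∫⁻ t in Set.Ico (0:ℝ) ((N:ℝ)*h), (‖g n t - pc (g n) h N t‖₊ : ℝ≥0∞) ^ p) ^ (1/p)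
          ≤ (ENNReal.ofReal (h ^ (α*p)) * C) ^ (1/p) :=
            ENNReal.rpow_le_rpow h2 (by positivity)
        _ = ENNReal.ofReal (h ^ (α*p)) ^ (1/p) * C ^ (1/p) :=
            ENNReal.mul_rpow_of_nonneg _ _ (by positivity)
        _ = ENNReal.ofReal (h ^ α) * C ^ (1/p) := by
            rw [ENNReal.ofReal_rpow_of_nonneg (by positivity) (by positivity)]
            congr 2
            rw [← Real.rpow_mul hhpos.le, mul_one_div, mul_div_assoc, div_self hp0.ne',
              mul_one]
        _ ≤ ENNReal.ofReal (h ^ α) * ENNReal.ofReal Mr := mul_le_mul_right hMle _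
        _ = ENNReal.ofReal (h ^ α * Mr) := (ENNReal.ofReal_mul (by positivity)).symm
    refine le_trans hchain ?_
    have b1 : ENNReal.ofReal ε₁ * eLpNorm (f n) q μ ≤ ENNReal.ofReal (ε₁ * Mr) := by
      rw [ENNReal.ofReal_mul hε₁0.le]
      exact mul_le_mul_right (hfsn n) _
    have b2 : ENNReal.ofReal ε₁ * eLpNorm (pc (f n) h N) q μ ≤ ENNReal.ofReal (ε₁ * Mr) := by
      rw [ENNReal.ofReal_mul hε₁0.le]
      exact mul_le_mul_right hbnd1 _
    have b3 : ENNReal.ofReal c * eLpNorm (fun t => g n t - pc (g n) h N t) q μ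
        ≤ ENNReal.ofReal (c * (h ^ α * Mr)) := by
      rw [ENNReal.ofReal_mul hc0]
      exact mul_le_mul_right hbnd2 _
    refine le_trans (add_le_add b1 (add_le_add b2 b3)) ?_
    have ha : (0:ℝ) ≤ ε₁ * Mr := by positivity
    have hcc : (0:ℝ) ≤ c * (h ^ α * Mr) := by positivity
    have hbb : (0:ℝ) ≤ ε₁ * Mr + c * (h ^ α * Mr) := by positivity
    rw [← ENNReal.ofReal_add ha hcc, ← ENNReal.ofReal_add ha hbb]
    refine ENNReal.ofReal_le_ofReal ?_
    have r1 : ε₁ * Mr ≤ ε/8 := by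
      rw [hε₁def, div_mul_eq_mul_div, div_le_div_iff₀ (by positivity) (by norm_num)]
      nlinarith
    have r2 : c * (h ^ α * Mr) ≤ ε/8 := by
      have s1 : c * (h ^ α * Mr) ≤ c * (τ * Mr) :=
        mul_le_mul_of_nonneg_left (mul_le_mul_of_nonneg_right hτα hMr0) hc0
      refine s1.trans ?_
      have s2 : c * (τ * Mr) = c * Mr * ε / (8 * (c + 1) * (Mr + 1)) := by
        rw [hτdef]; ring
      rw [s2, div_le_div_iff₀ (by positivity) (by norm_num)]
      nlinarith [mul_nonneg hc0 hMr0, hε.le]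
    linarith
  -- conclude by total boundedness / sequential compactness
  have htb : TotallyBounded (Set.range X) := by
    refine totallyBounded_of_compact_approx fun ε hε => ?_
    obtain ⟨K, hK, hap⟩ := key ε hε
    refine ⟨K, hK, ?_⟩
    rintro x ⟨n, rfl⟩
    exact hap n
  have hcpt : IsCompact (closure (Set.range X)) :=
    TotallyBounded.isCompact_of_isClosed htb.closure isClosed_closure
  obtain ⟨V, -, φ, hφ, hconv⟩ :=
    hcpt.tendsto_subseq (fun n => subset_closure (Set.mem_range_self n))
  refine ⟨φ, hφ, ⇑V, Lp.aestronglyMeasurable V, ?_, ?_⟩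
  · have hv : (∫⁻ t, ENNReal.ofReal (‖(V : ℝ → B) t‖ ^ p) ∂μ)
        = (eLpNorm (⇑V) q μ) ^ p := by
      rw [lintegral_congr fun t => ofReal_norm_rpow ((V : ℝ → B) t) hp0.le]
      exact lintegral_eq_eLpNorm_rpow hp _
    rw [hv]
    exact ENNReal.rpow_lt_top_of_nonneg hp0.le (Lp.eLpNorm_ne_top V)
  · have hdist : Tendsto (fun k => dist (X (φ k)) V) atTop (nhds 0) :=
      tendsto_iff_dist_tendsto_zero.1 hconv
    have heq : ∀ k, (∫⁻ t, ENNReal.ofReal (‖j₀ (u (φ k) t) - (V : ℝ → B) t‖ ^ p) ∂μ)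
        = ENNReal.ofReal ((dist (X (φ k)) V) ^ p) := by
      intro k
      have h1 : (∫⁻ t, ENNReal.ofReal (‖j₀ (u (φ k) t) - (V : ℝ → B) t‖ ^ p) ∂μ)
          = (eLpNorm (fun t => j₀ (u (φ k) t) - (V : ℝ → B) t) q μ) ^ p := by
        rw [lintegral_congr fun t => ofReal_norm_rpow _ hp0.le]
        exact lintegral_eq_eLpNorm_rpow hp _
      have h2 : eLpNorm (fun t => j₀ (u (φ k) t) - (V : ℝ → B) t) q μ
          = eLpNorm (⇑(X (φ k)) - ⇑V) q μ := by
        refine eLpNorm_congr_ae ?_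
        filter_upwards [hfae (φ k), (hXmem (φ k)).coeFn_toLp] with t h3 h4
        simp only [Pi.sub_apply, h3, hXdef, h4]
      rw [h1, h2, ← Lp.edist_def, edist_dist,
        ENNReal.ofReal_rpow_of_nonneg dist_nonneg hp0.le]
    have hto : Tendsto (fun k => (dist (X (φ k)) V) ^ p) atTop (nhds 0) := by
      have hc : ContinuousAt (fun x : ℝ => x ^ p) 0 :=
        Real.continuousAt_rpow_const 0 p (Or.inr hp0.le)
      have h4 := hc.tendsto.comp hdist
      simpa [Function.comp_def, Real.zero_rpow hp0.ne'] using h4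
    have h5 : Tendsto (fun k => ENNReal.ofReal ((dist (X (φ k)) V) ^ p)) atTop (nhds 0) := by
      simpa using ENNReal.tendsto_ofReal hto
    exact h5.congr fun k => (heq k).symm
end
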